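/- arXiv:1905.05459 — 4 statements merged into one kernel-verified Lean document; each statement's English description precedes it below -/
import Mathlib

section
/- Let α ∈ (1,2), c > 1, θ admissible, φ the measure on (−∞,0) with φ((−∞,−x)) = x^{−α}θ(log x), and ψ(z) = ∫_{(−∞,0)} (e^{izx} − 1 − izx) dφ(x) for Im z < 0. Then for every z in the open lower half-plane: if Re z > 0 then Im ψ(z) > 0, and if Re z < 0 then Im ψ(z) < 0. Consequently, ψ(z) is real if and only if z lies on the negative imaginary axis, i.e. z = −ik with k > 0. -/
open MeasureTheory Set Filter
open scoped ENNReal NNReal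

lemma aux_pow_loc {t : ℝ} (ht : 1 ≤ t) : ∃ n : ℕ, (2:ℝ)^n ≤ t ∧ t ≤ 2^(n+1) := by
  have h : ∃ n : ℕ, t ≤ 2 ^ (n+1) := by
    obtain ⟨n, hn⟩ := pow_unbounded_of_one_lt t (by norm_num : (1:ℝ) < 2)
    exact ⟨n, hn.le.trans (by gcongr <;> norm_num)⟩
  classical
  refine ⟨Nat.find h, ?_, Nat.find_spec h⟩
  rcases Nat.eq_zero_or_pos (Nat.find h) with h0 | h0
  · simpa [h0] using ht
  · have hmin := Nat.find_min h (Nat.sub_lt h0 one_pos)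
    have : (Nat.find h - 1) + 1 = Nat.find h := Nat.succ_pred_eq_of_pos h0
    rw [this] at hmin
    linarith [not_le.mp hmin]

lemma key_sin {u s : ℝ} (hu : u < 0) (hs : s < 0) : 0 < Real.exp u * Real.sin s - s := by
  have he1 : Real.exp u < 1 := Real.exp_lt_one_iff.mpr hu
  have he0 : 0 < Real.exp u := Real.exp_pos u
  have hsin : s < Real.sin s := by
    have := Real.sin_lt (x := -s) (by linarith)
    rw [Real.sin_neg] at this; linarith
  rcases le_or_gt (Real.sin s) 0 with h | h
  · nlinarith
  · nlinarith


lemma rpow_nat_aux (α : ℝ) (n : ℕ) : ((2:ℝ)^n) ^ (-α) = ((2:ℝ)^(-α))^n := by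
  rw [← Real.rpow_natCast (2:ℝ) n, ← Real.rpow_mul (by norm_num : (0:ℝ) ≤ 2), mul_comm,
    Real.rpow_mul (by norm_num : (0:ℝ) ≤ 2), Real.rpow_natCast]

lemma tsum_ofReal_geom_lt_top {A q : ℝ} (hA : 0 ≤ A) (hq0 : 0 ≤ q) (hq1 : q < 1) :
    ∑' n : ℕ, ENNReal.ofReal (A * q ^ n) < ⊤ := by
  rw [← ENNReal.ofReal_tsum_of_nonneg (fun n => mul_nonneg hA (pow_nonneg hq0 n))
    ((summable_geometric_of_lt_one hq0 hq1).mul_left A)]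
  exact ENNReal.ofReal_lt_top

lemma integrable_psi_integrand (α C : ℝ) (hα1 : 1 < α) (hα2 : α < 2) (hC : 0 < C)
    (φm : Measure ℝ)
    (htail : ∀ x : ℝ, 0 < x → φm (Iio (-x)) ≤ ENNReal.ofReal (C * x ^ (-α)))
    (z : ℂ) (hz : z.im < 0) :
    IntegrableOn (fun x : ℝ =>
      Complex.exp (Complex.I * z * (x:ℂ)) - 1 - Complex.I * z * (x:ℂ)) (Iio 0) φm := by
  set A := ‖z‖ with hA
  have hA0 : 0 ≤ A := norm_nonneg z
  set L : ℝ := 2 + A with hL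
  set K : ℝ := (2 + A) * (1 + A)^2 with hK
  have hL0 : 0 < L := by positivity
  have hK0 : 0 < K := by positivity
  -- basic facts about w = I*z*x
  have habsw : ∀ x : ℝ, ‖Complex.I * z * x‖ = A * |x| := by
    intro x
    rw [norm_mul, norm_mul, Complex.norm_I, Complex.norm_real, Real.norm_eq_abs, one_mul]
  have hrew : ∀ x : ℝ, x ≤ 0 → (Complex.I * z * (x:ℂ)).re ≤ 0 := by
    intro x hx
    have : (Complex.I * z * (x:ℂ)).re = -z.im * x := by
      simp [Complex.mul_re, Complex.mul_im]
    rw [this]; nlinarith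
  -- pointwise bounds
  have hbound1 : ∀ x : ℝ, x ≤ -1 →
      ‖Complex.exp (Complex.I * z * (x:ℂ)) - 1 - Complex.I * z * (x:ℂ)‖ ≤ L * |x| := by
    intro x hx
    have h1 : |x| = -x := abs_of_neg (by linarith)
    have h2 : (1:ℝ) ≤ |x| := by rw [h1]; linarith
    have h3 : ‖Complex.exp (Complex.I * z * x)‖ ≤ 1 := by
      rw [Complex.norm_exp, Real.exp_le_one_iff]
      exact hrew x (by linarith)
    calc ‖Complex.exp (Complex.I * z * (x:ℂ)) - 1 - Complex.I * z * (x:ℂ)‖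
        ≤ ‖Complex.exp (Complex.I * z * (x:ℂ)) - 1‖ + ‖Complex.I * z * (x:ℂ)‖ :=
          norm_sub_le _ _
      _ ≤ (‖Complex.exp (Complex.I * z * (x:ℂ))‖ + ‖(1:ℂ)‖) + A * |x| := by
          rw [habsw x]
          exact add_le_add_left (norm_sub_le _ _) _
      _ ≤ (1 + 1) + A * |x| := by
          rw [norm_one]
          exact add_le_add_left (add_le_add_left h3 _) _
      _ ≤ 2 * |x| + A * |x| := by nlinarith
      _ = L * |x| := by rw [hL]; ring
  have hbound2 : ∀ x : ℝ, -1 ≤ x → x ≤ 0 →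
      ‖Complex.exp (Complex.I * z * (x:ℂ)) - 1 - Complex.I * z * (x:ℂ)‖ ≤ K * x^2 := by
    intro x hx1 hx0
    have hxabs : |x| ≤ 1 := abs_le.mpr ⟨hx1, hx0.trans zero_le_one⟩
    rcases le_or_gt ‖Complex.I * z * x‖ 1 with h | h
    · have := Complex.norm_exp_sub_one_sub_id_le h
      refine this.trans ?_
      rw [habsw x]
      have h2 : (A * |x|)^2 = A^2 * x^2 := by rw [mul_pow, sq_abs]
      rw [h2]
      have h3 : A^2 ≤ K := by rw [hK]; nlinarith
      nlinarith [sq_nonneg x]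
    · have h3 : ‖Complex.exp (Complex.I * z * x)‖ ≤ 1 := by
        rw [Complex.norm_exp, Real.exp_le_one_iff]
        exact hrew x hx0
      have hb : ‖Complex.exp (Complex.I * z * (x:ℂ)) - 1 - Complex.I * z * (x:ℂ)‖ ≤ 2 + A := by
        calc ‖Complex.exp (Complex.I * z * (x:ℂ)) - 1 - Complex.I * z * (x:ℂ)‖
            ≤ ‖Complex.exp (Complex.I * z * (x:ℂ)) - 1‖ + ‖Complex.I * z * (x:ℂ)‖ :=
              norm_sub_le _ _
          _ ≤ (1 + 1) + A * |x| := by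
              rw [habsw x]
              refine add_le_add ?_ le_rfl
              calc ‖Complex.exp (Complex.I * z * (x:ℂ)) - 1‖
                  ≤ ‖Complex.exp (Complex.I * z * (x:ℂ))‖ + ‖(1:ℂ)‖ := norm_sub_le _ _
                _ ≤ 1 + 1 := by rw [norm_one]; exact add_le_add_left h3 _
          _ ≤ 2 + A := by nlinarith
      have h4 : 1 < (1 + A)^2 * x^2 := by
        have := habsw x ▸ h
        nlinarith [abs_nonneg x, sq_abs x]
      calc ‖Complex.exp (Complex.I * z * (x:ℂ)) - 1 - Complex.I * z * (x:ℂ)‖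
          ≤ 2 + A := hb
        _ ≤ K * x^2 := by rw [hK]; nlinarith
  constructor
  · exact Continuous.aestronglyMeasurable (by fun_prop)
  · rw [hasFiniteIntegral_iff_norm]
    have hr1 : (0:ℝ) ≤ (2:ℝ)^(-α) := Real.rpow_nonneg (by norm_num) _
    have hr2 : (0:ℝ) ≤ (2:ℝ)^α := Real.rpow_nonneg (by norm_num) _
    have hq1 : 2 * (2:ℝ)^(-α) < 1 := by
      have h1 : (2:ℝ)^(-α) < (2:ℝ)^(-1:ℝ) :=
        (Real.rpow_lt_rpow_left_iff (by norm_num)).mpr (by linarith)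
      rw [Real.rpow_neg_one] at h1
      norm_num at h1
      linarith
    have h44 : (2:ℝ)^(2:ℝ) = 4 := by
      rw [Real.rpow_two]; norm_num
    have hq2 : (2:ℝ)^α / 4 < 1 := by
      have h1 : (2:ℝ)^α < (2:ℝ)^(2:ℝ) :=
        (Real.rpow_lt_rpow_left_iff (by norm_num)).mpr hα2
      rw [h44] at h1
      linarith
    have hsplit : Iio (0:ℝ) = Iic (-1) ∪ Ioo (-1) 0 :=
      (Set.Iic_union_Ioo_eq_Iio (by norm_num)).symm
    rw [hsplit]
    refine lt_of_le_of_lt (lintegral_union_le _ _ _) (ENNReal.add_lt_top.mpr ⟨?_, ?_⟩)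
    · -- far part
      have hcover : Iic (-1:ℝ) ⊆ ⋃ n : ℕ, Icc (-(2^(n+1)) : ℝ) (-(2^n : ℝ)) := by
        intro x hx
        have hx' : x ≤ -1 := hx
        obtain ⟨n, h1, h2⟩ := aux_pow_loc (t := -x) (by linarith)
        exact mem_iUnion.mpr ⟨n, by constructor <;> linarith⟩
      refine lt_of_le_of_lt (lintegral_mono_set hcover) ?_
      refine lt_of_le_of_lt (lintegral_iUnion_le _ _) ?_
      have hpiece : ∀ n : ℕ, ∫⁻ x in Icc (-(2^(n+1)) : ℝ) (-(2^n : ℝ)),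
          ENNReal.ofReal ‖Complex.exp (Complex.I * z * (x:ℂ)) - 1 - Complex.I * z * (x:ℂ)‖ ∂φm
          ≤ ENNReal.ofReal ((2*L*C*(2:ℝ)^α) * (2 * (2:ℝ)^(-α))^n) := by
        intro n
        have h2n : (0:ℝ) < 2^n := by positivity
        have h2n1 : (0:ℝ) < 2^(n+1) := by positivity
        calc ∫⁻ x in Icc (-(2^(n+1)) : ℝ) (-(2^n : ℝ)),
            ENNReal.ofReal ‖Complex.exp (Complex.I * z * (x:ℂ)) - 1 - Complex.I * z * (x:ℂ)‖ ∂φm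
            ≤ ∫⁻ _ in Icc (-(2^(n+1)) : ℝ) (-(2^n : ℝ)), ENNReal.ofReal (L * 2^(n+1)) ∂φm := by
              refine setLIntegral_mono measurable_const ?_
              intro x hx
              refine ENNReal.ofReal_le_ofReal ?_
              have h1n : (1:ℝ) ≤ 2^n := one_le_pow₀ (by norm_num)
              have hx1 : x ≤ -1 := hx.2.trans (by linarith)
              refine (hbound1 x hx1).trans ?_
              have hxa : |x| ≤ 2^(n+1) := by
                rw [abs_of_neg (by linarith : x < 0)]
                linarith [hx.1]
              nlinarith
          _ = ENNReal.ofReal (L * 2^(n+1)) * φm (Icc (-(2^(n+1)) : ℝ) (-(2^n : ℝ))) :=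
              setLIntegral_const _ _
          _ ≤ ENNReal.ofReal (L * 2^(n+1)) * ENNReal.ofReal (C * ((2^n : ℝ)/2) ^ (-α)) := by
              gcongr
              refine (measure_mono ?_).trans (htail ((2^n : ℝ)/2) (by positivity))
              intro x hx
              exact lt_of_le_of_lt hx.2 (by linarith)
          _ = ENNReal.ofReal (L * 2^(n+1) * (C * ((2^n : ℝ)/2) ^ (-α))) :=
              (ENNReal.ofReal_mul (by positivity)).symm
          _ = ENNReal.ofReal ((2*L*C*(2:ℝ)^α) * (2 * (2:ℝ)^(-α))^n) := by
              congr 1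
              have e1 : ((2:ℝ)^n / 2) ^ (-α) = ((2:ℝ)^(-α))^n * (2:ℝ)^α := by
                rw [Real.div_rpow (by positivity) (by norm_num : (0:ℝ) ≤ 2), rpow_nat_aux,
                  div_eq_mul_inv, ← Real.rpow_neg (by norm_num : (0:ℝ) ≤ 2), neg_neg]
              rw [e1]; ring
      refine lt_of_le_of_lt (ENNReal.tsum_le_tsum hpiece) (tsum_ofReal_geom_lt_top ?_ ?_ hq1)
      · positivity
      · positivity
    · -- near part
      have hcover : Ioo (-1:ℝ) 0 ⊆ ⋃ n : ℕ, Icc (-((2:ℝ)^n)⁻¹) (-((2:ℝ)^(n+1))⁻¹) := by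
        intro x hx
        have hx0 : 0 < -x := by linarith [hx.2]
        have hx1 : 1 ≤ (-x)⁻¹ := by
          rw [le_inv_comm₀ one_pos hx0]
          simp
          linarith [hx.1]
        obtain ⟨n, h1, h2⟩ := aux_pow_loc hx1
        refine mem_iUnion.mpr ⟨n, ?_, ?_⟩
        · have := inv_anti₀ (by positivity : (0:ℝ) < 2^n) h1
          rw [inv_inv] at this
          linarith
        · have := inv_anti₀ (by positivity : (0:ℝ) < (-x)⁻¹) h2
          rw [inv_inv] at this
          linarith
      refine lt_of_le_of_lt (lintegral_mono_set hcover) ?_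
      refine lt_of_le_of_lt (lintegral_iUnion_le _ _) ?_
      have hpiece : ∀ n : ℕ, ∫⁻ x in Icc (-((2:ℝ)^n)⁻¹) (-((2:ℝ)^(n+1))⁻¹),
          ENNReal.ofReal ‖Complex.exp (Complex.I * z * (x:ℂ)) - 1 - Complex.I * z * (x:ℂ)‖ ∂φm
          ≤ ENNReal.ofReal ((K*C*((2:ℝ)^α)^2) * ((2:ℝ)^α/4)^n) := by
        intro n
        have h2n : (0:ℝ) < 2^n := by positivity
        have h2n1 : (0:ℝ) < 2^(n+1) := by positivity
        have h2n2 : (0:ℝ) < 2^(n+2) := by positivity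
        have h1n : (1:ℝ) ≤ 2^n := one_le_pow₀ (by norm_num)
        have hone : ((2:ℝ)^n)⁻¹ ≤ 1 := by
          rw [inv_le_one_iff₀]
          right
          exact h1n
        calc ∫⁻ x in Icc (-((2:ℝ)^n)⁻¹) (-((2:ℝ)^(n+1))⁻¹),
            ENNReal.ofReal ‖Complex.exp (Complex.I * z * (x:ℂ)) - 1 - Complex.I * z * (x:ℂ)‖ ∂φm
            ≤ ∫⁻ _ in Icc (-((2:ℝ)^n)⁻¹) (-((2:ℝ)^(n+1))⁻¹),
                ENNReal.ofReal (K * (((2:ℝ)^n)⁻¹)^2) ∂φm := by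
              refine setLIntegral_mono measurable_const ?_
              intro x hx
              refine ENNReal.ofReal_le_ofReal ?_
              have hxneg : x ≤ 0 := hx.2.trans (neg_nonpos.mpr (by positivity))
              have hxge : -1 ≤ x := by linarith [hx.1]
              refine (hbound2 x hxge hxneg).trans ?_
              have hsq : x^2 ≤ (((2:ℝ)^n)⁻¹)^2 := by
                refine sq_le_sq' ?_ ?_
                · exact hx.1
                · refine hxneg.trans (by positivity)
              nlinarith
          _ = ENNReal.ofReal (K * (((2:ℝ)^n)⁻¹)^2) * φm (Icc (-((2:ℝ)^n)⁻¹) (-((2:ℝ)^(n+1))⁻¹)) :=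
              setLIntegral_const _ _
          _ ≤ ENNReal.ofReal (K * (((2:ℝ)^n)⁻¹)^2) *
                ENNReal.ofReal (C * (((2:ℝ)^(n+2))⁻¹) ^ (-α)) := by
              gcongr
              refine (measure_mono ?_).trans (htail (((2:ℝ)^(n+2))⁻¹) (by positivity))
              intro x hx
              refine lt_of_le_of_lt hx.2 ?_
              simp only [neg_lt_neg_iff]
              refine inv_strictAnti₀ (by positivity) ?_
              have : (2:ℝ)^(n+2) = 2 * 2^(n+1) := by ring
              linarith
          _ = ENNReal.ofReal (K * (((2:ℝ)^n)⁻¹)^2 * (C * (((2:ℝ)^(n+2))⁻¹) ^ (-α))) :=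
              (ENNReal.ofReal_mul (by positivity)).symm
          _ = ENNReal.ofReal ((K*C*((2:ℝ)^α)^2) * ((2:ℝ)^α/4)^n) := by
              congr 1
              have e2 : (((2:ℝ)^(n+2))⁻¹) ^ (-α) = ((2:ℝ)^α)^(n+2) := by
                rw [← Real.rpow_natCast (2:ℝ) (n+2),
                  ← Real.rpow_neg_one ((2:ℝ)^(((n+2):ℕ):ℝ)),
                  ← Real.rpow_mul (by norm_num : (0:ℝ) ≤ 2),
                  ← Real.rpow_mul (by norm_num : (0:ℝ) ≤ 2),
                  ← Real.rpow_natCast ((2:ℝ)^α) (n+2),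
                  ← Real.rpow_mul (by norm_num : (0:ℝ) ≤ 2)]
                congr 1
                push_cast
                ring
              have h4 : ((2:ℝ)^n)^2 = 4^n := by
                rw [← pow_mul, mul_comm, pow_mul]
                norm_num
              rw [e2, div_pow, pow_add, ← h4]
              field_simp
      refine lt_of_le_of_lt (ENNReal.tsum_le_tsum hpiece) (tsum_ofReal_geom_lt_top ?_ ?_ hq2)
      · positivity
      · positivity

/-- The log-characteristic function of a negatively skewed semistable law with Levy
measure `φm` concentrated on the negative half-line:
`ψ(z) = ∫_{(-∞,0)} (e^{izx} - 1 - izx) dφ(x)`. -/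
noncomputable def psiSemi (φm : MeasureTheory.Measure ℝ) (z : ℂ) : ℂ :=
  ∫ x in Set.Iio (0 : ℝ),
    (Complex.exp (Complex.I * z * (x : ℂ)) - 1 - Complex.I * z * (x : ℂ)) ∂φm

lemma psi_im_eq (φm : Measure ℝ) (z : ℂ)
    (hint : IntegrableOn (fun x : ℝ =>
      Complex.exp (Complex.I * z * (x:ℂ)) - 1 - Complex.I * z * (x:ℂ)) (Iio 0) φm) :
    (psiSemi φm z).im
      = ∫ x in Iio (0:ℝ), (Real.exp (-z.im * x) * Real.sin (z.re * x) - z.re * x) ∂φm := by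
  rw [psiSemi, ← RCLike.im_to_complex, ← integral_im hint]
  refine integral_congr_ae (Eventually.of_forall fun x => ?_)
  have hre : (Complex.I * z * (x:ℂ)).re = -z.im * x := by
    simp [Complex.mul_re, Complex.mul_im]
  have him : (Complex.I * z * (x:ℂ)).im = z.re * x := by
    simp [Complex.mul_re, Complex.mul_im]
  simp only [RCLike.im_to_complex, Complex.sub_im, Complex.exp_im, Complex.one_im, hre, him]
  ring

lemma psi_im_pos (φm : Measure ℝ) (z : ℂ) (him : z.im < 0) (hre : 0 < z.re)
    (hint : IntegrableOn (fun x : ℝ =>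
      Complex.exp (Complex.I * z * (x:ℂ)) - 1 - Complex.I * z * (x:ℂ)) (Iio 0) φm)
    (hmass : 0 < φm (Iio 0)) : 0 < (psiSemi φm z).im := by
  rw [psi_im_eq φm z hint]
  set h : ℝ → ℝ := fun x => Real.exp (-z.im * x) * Real.sin (z.re * x) - z.re * x with hh
  have hpos : ∀ x : ℝ, x < 0 → 0 < h x := by
    intro x hx
    exact key_sin (by nlinarith : -z.im * x < 0) (by nlinarith : z.re * x < 0)
  have hint2 : IntegrableOn h (Iio 0) φm := by
    refine (hint.im).congr ?_
    refine (ae_restrict_iff' measurableSet_Iio).mpr (Eventually.of_forall fun x hx => ?_)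
    have hre2 : (Complex.I * z * (x:ℂ)).re = -z.im * x := by
      simp [Complex.mul_re, Complex.mul_im]
    have him2 : (Complex.I * z * (x:ℂ)).im = z.re * x := by
      simp [Complex.mul_re, Complex.mul_im]
    simp only [RCLike.im_to_complex, Complex.sub_im, Complex.exp_im, Complex.one_im, hre2, him2,
      hh]
    ring
  rw [setIntegral_pos_iff_support_of_nonneg_ae ?_ hint2]
  · refine lt_of_lt_of_le hmass (measure_mono fun x hx => ?_)
    exact ⟨ne_of_gt (hpos x hx), hx⟩
  · refine (ae_restrict_iff' measurableSet_Iio).mpr (Eventually.of_forall fun x hx => ?_)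
    exact (hpos x hx).le

/-- sign of the imaginary part of `ψ` on the open lower half-plane, and
`ψ(z)` is real iff `z` lies on the negative imaginary axis. -/
theorem psiSemi_imaginary_part_sign
    (α c : ℝ) (hα : 1 < α ∧ α < 2) (hc : 1 < c)
    (θ : ℝ → ℝ) (hθc : Continuous θ) (hθpos : ∀ y : ℝ, 0 < θ y)
    (hθper : Function.Periodic θ (Real.log (c ^ (1 / α))))
    (hθmono : AntitoneOn (fun x : ℝ => x ^ (-α) * θ (Real.log x)) (Set.Ioi 0))
    (φm : MeasureTheory.Measure ℝ)
    (hφtail : ∀ x : ℝ, 0 < x → φm (Set.Iio (-x)) = ENNReal.ofReal (x ^ (-α) * θ (Real.log x)))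
    (hφsupp : φm (Set.Ici 0) = 0) :
    ∀ z : ℂ, z.im < 0 →
      (0 < z.re → 0 < (psiSemi φm z).im) ∧
      (z.re < 0 → (psiSemi φm z).im < 0) ∧
      ((psiSemi φm z).im = 0 ↔ ∃ k : ℝ, 0 < k ∧ z = -(Complex.I * (k : ℂ))) := by
  obtain ⟨hα1, hα2⟩ := hα
  have hc1 : (1:ℝ) < c ^ (1/α) := by
    rw [Real.one_lt_rpow_iff_of_pos (by linarith)]
    left
    exact ⟨hc, by positivity⟩
  have hp : 0 < Real.log (c ^ (1/α)) := Real.log_pos hc1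
  obtain ⟨m, hm, hmax⟩ := isCompact_Icc.exists_isMaxOn
    (nonempty_Icc.mpr hp.le) hθc.continuousOn
  have hC : 0 < θ m := hθpos m
  have hθle : ∀ y, θ y ≤ θ m := by
    intro y
    obtain ⟨y', hy', hyy⟩ := hθper.exists_mem_Ico₀ hp y
    rw [hyy]
    exact hmax ⟨hy'.1, hy'.2.le⟩
  have htail : ∀ x : ℝ, 0 < x → φm (Iio (-x)) ≤ ENNReal.ofReal (θ m * x ^ (-α)) := by
    intro x hx
    rw [hφtail x hx]
    refine ENNReal.ofReal_le_ofReal ?_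
    rw [mul_comm (θ m)]
    exact mul_le_mul_of_nonneg_left (hθle _) (Real.rpow_nonneg hx.le _)
  have hmass : 0 < φm (Iio 0) := by
    have h1 : φm (Iio (-1:ℝ)) = ENNReal.ofReal (θ 0) := by
      rw [hφtail 1 one_pos]
      simp [Real.one_rpow, Real.log_one]
    calc (0:ℝ≥0∞) < ENNReal.ofReal (θ 0) := ENNReal.ofReal_pos.mpr (hθpos 0)
      _ = φm (Iio (-1:ℝ)) := h1.symm
      _ ≤ φm (Iio 0) := measure_mono fun x hx => lt_trans hx (by norm_num : (-1:ℝ) < 0)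
  have hposlem : ∀ w : ℂ, w.im < 0 → 0 < w.re → 0 < (psiSemi φm w).im := fun w h1 h2 =>
    psi_im_pos φm w h1 h2 (integrable_psi_integrand α (θ m) hα1 hα2 hC φm htail w h1) hmass
  have hconj : ∀ w : ℂ, psiSemi φm (-(starRingEnd ℂ) w) = (starRingEnd ℂ) (psiSemi φm w) := by
    intro w
    rw [psiSemi, psiSemi, ← integral_conj]
    refine integral_congr_ae (Eventually.of_forall fun x => ?_)
    have hw : Complex.I * (-(starRingEnd ℂ) w) * (x:ℂ)
        = (starRingEnd ℂ) (Complex.I * w * (x:ℂ)) := by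
      simp only [map_mul, Complex.conj_I, Complex.conj_ofReal]
      ring
    beta_reduce
    rw [hw, Complex.exp_conj, map_sub, map_sub, map_one]
  intro z hz
  have hint := integrable_psi_integrand α (θ m) hα1 hα2 hC φm htail z hz
  have hneg : z.re < 0 → (psiSemi φm z).im < 0 := by
    intro hre
    have h1 : 0 < (psiSemi φm (-(starRingEnd ℂ) z)).im := by
      refine hposlem _ ?_ ?_
      · simpa using hz
      · simpa using hre
    rw [hconj z] at h1
    simpa using h1
  refine ⟨hposlem z hz, hneg, ?_, ?_⟩
  · intro h0
    rcases lt_trichotomy z.re 0 with h | h | h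
    · exact absurd h0 (ne_of_lt (hneg h))
    · refine ⟨-z.im, by linarith, ?_⟩
      apply Complex.ext
      · simp [h]
      · simp
    · exact absurd h0 (ne_of_gt (hposlem z hz h))
  · rintro ⟨k, hk, hzk⟩
    have hre0 : z.re = 0 := by rw [hzk]; simp
    rw [psi_im_eq φm z hint, hre0]
    simp
end

section
/- Let α ∈ (1,2), c > 1, θ admissible, φ the measure on (−∞,0) with φ((−∞,−x)) = x^{−α}θ(log x), and ψ(z) = ∫_{(−∞,0)} (e^{izx} − 1 − izx) dφ(x). Then for every s > 0 there is a unique z in the open lower half-plane {Im z < 0} with ψ(z) = s; moreover this z lies on the negative imaginary axis, i.e. z = −i·ξ(s) for a unique ξ(s) > 0. -/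
open MeasureTheory Set Filter

namespace PsiAux


lemma theta_bdd {θ : ℝ → ℝ} (hθc : Continuous θ) {T : ℝ} (hT : 0 < T)
    (hper : Function.Periodic θ T) : ∃ M : ℝ, 0 < M ∧ ∀ y, θ y ≤ M := by
  obtain ⟨x₀, hx₀, hmax⟩ := (isCompact_Icc (a := (0:ℝ)) (b := T)).exists_isMaxOn
    (nonempty_Icc.mpr hT.le) hθc.continuousOn
  refine ⟨max (θ x₀) 1, lt_of_lt_of_le one_pos (le_max_right _ _), fun y => ?_⟩
  obtain ⟨y', hy', hEq⟩ := hper.exists_mem_Ico₀ hT y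
  rw [hEq]
  exact le_trans (hmax (Ico_subset_Icc_self hy')) (le_max_left _ _)

lemma abs_exp_sub_le {w : ℂ} (hw : w.re ≤ 0) :
    ‖Complex.exp w - 1 - w‖ ≤ 3 * min (‖w‖ ^ 2) (‖w‖) := by
  rcases le_total (‖w‖) 1 with h1 | h1
  · have h2 := Complex.norm_exp_sub_one_sub_id_le h1
    have : min (‖w‖ ^ 2) (‖w‖) = ‖w‖ ^ 2 := by
      apply min_eq_left
      nlinarith [norm_nonneg w]
    rw [this]; nlinarith [norm_nonneg w]
  · have h2 : ‖Complex.exp w‖ ≤ 1 := by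
      rw [Complex.norm_exp]; exact Real.exp_le_one_iff.mpr hw
    have h3 : ‖Complex.exp w - 1 - w‖ ≤
        ‖Complex.exp w‖ + 1 + ‖w‖ := by
      refine le_trans (norm_sub_le _ _) ?_
      have h4 := norm_sub_le (Complex.exp w) 1
      have h5 : ‖(1 : ℂ)‖ = 1 := by simp
      rw [h5] at h4
      linarith
    have : min (‖w‖ ^ 2) (‖w‖) = ‖w‖ := by
      apply min_eq_right; nlinarith
    rw [this]; linarith

lemma abs_exp_sub_le_real {t : ℝ} (ht : t ≤ 0) :
    |Real.exp t - 1 - t| ≤ 3 * min (t ^ 2) (-t) := by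
  have h := abs_exp_sub_le (w := (t : ℂ)) (by simpa using ht)
  have h1 : (Complex.exp (t:ℂ) - 1 - (t:ℂ)) = ((Real.exp t - 1 - t : ℝ) : ℂ) := by
    push_cast [Complex.ofReal_exp]; ring
  rw [h1, Complex.norm_real, Complex.norm_real] at h
  simp only [Real.norm_eq_abs] at h
  rwa [abs_of_nonpos ht, neg_sq] at h

lemma min_mul_le {k x : ℝ} (hk : 0 ≤ k) (hx : x ≤ 0) :
    min ((k * x) ^ 2) (-(k * x)) ≤ (k ^ 2 + k) * min (x ^ 2) (-x) := by
  rcases le_total (x ^ 2) (-x) with h | h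
  · rw [min_eq_left h]
    refine le_trans (min_le_left _ _) ?_
    have : (k * x) ^ 2 = k ^ 2 * x ^ 2 := by ring
    nlinarith [sq_nonneg x]
  · rw [min_eq_right h]
    refine le_trans (min_le_right _ _) ?_
    nlinarith [sq_nonneg k, mul_nonneg hk (neg_nonneg.mpr hx)]



lemma nat_two_pow_eq (n : ℕ) : ((2:ℝ) ^ n) = (2:ℝ) ^ (n:ℝ) := (Real.rpow_natCast 2 n).symm

lemma two_pow_rpow (β : ℝ) (n : ℕ) : ((2:ℝ) ^ β) ^ n = (2:ℝ) ^ (β * n) := by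
  rw [← Real.rpow_natCast ((2:ℝ) ^ β) n, ← Real.rpow_mul (by norm_num : (0:ℝ) ≤ 2)]

lemma rpow_combine (a b : ℝ) : (2:ℝ) ^ a * (2:ℝ) ^ b = (2:ℝ) ^ (a + b) :=
  (Real.rpow_add two_pos a b).symm

lemma tail_term_eq (α M : ℝ) (n : ℕ) :
    (2:ℝ) ^ (n+1) * (((2:ℝ) ^ n) ^ (-α) * M) = (2 * M) * ((2:ℝ) ^ (1 - α)) ^ n := by
  have e1 : ((2:ℝ) ^ (n+1) : ℝ) = (2:ℝ) ^ ((n:ℝ)+1) := by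
    rw [← Real.rpow_natCast 2 (n+1)]; push_cast; ring_nf
  have e2 : (((2:ℝ) ^ n) ^ (-α) : ℝ) = (2:ℝ) ^ ((n:ℝ) * (-α)) := by
    rw [nat_two_pow_eq n, ← Real.rpow_mul (by norm_num : (0:ℝ) ≤ 2)]
  rw [e1, e2, two_pow_rpow]
  calc (2:ℝ) ^ ((n:ℝ)+1) * ((2:ℝ) ^ ((n:ℝ)*(-α)) * M)
      = ((2:ℝ) ^ ((n:ℝ)+1) * (2:ℝ) ^ ((n:ℝ)*(-α))) * M := by ring
    _ = (2:ℝ) ^ (((n:ℝ)+1) + (n:ℝ)*(-α)) * M := by rw [rpow_combine]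
    _ = ((2:ℝ)^(1:ℝ) * (2:ℝ) ^ ((1-α)*(n:ℝ))) * M := by rw [rpow_combine]; congr 1; ring
    _ = (2 * M) * (2:ℝ) ^ ((1-α)*(n:ℝ)) := by rw [Real.rpow_one]; ring

lemma near_term_eq (α M : ℝ) (n : ℕ) :
    (1 / (2:ℝ) ^ n) ^ 2 * ((1 / (2:ℝ) ^ (n+1)) ^ (-α) * M)
      = (M * (2:ℝ) ^ α) * ((2:ℝ) ^ (α - 2)) ^ n := by
  have key : ∀ m : ℕ, (1 / (2:ℝ) ^ m) = (2:ℝ) ^ (-(m:ℝ)) := by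
    intro m
    rw [one_div, nat_two_pow_eq m, ← Real.rpow_neg (by norm_num : (0:ℝ) ≤ 2)]
  have e1 : (1 / (2:ℝ) ^ n) ^ 2 = (2:ℝ) ^ ((-(n:ℝ)) * 2) := by
    rw [key n, ← Real.rpow_natCast ((2:ℝ) ^ (-(n:ℝ))) 2,
      ← Real.rpow_mul (by norm_num : (0:ℝ) ≤ 2)]
    norm_num
  have e2 : (1 / (2:ℝ) ^ (n+1)) ^ (-α) = (2:ℝ) ^ ((-((n:ℝ)+1)) * (-α)) := by
    rw [key (n+1), ← Real.rpow_mul (by norm_num : (0:ℝ) ≤ 2)]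
    push_cast; ring_nf
  rw [e1, e2, two_pow_rpow]
  calc (2:ℝ) ^ ((-(n:ℝ))*2) * ((2:ℝ) ^ ((-((n:ℝ)+1))*(-α)) * M)
      = ((2:ℝ) ^ ((-(n:ℝ))*2) * (2:ℝ) ^ ((-((n:ℝ)+1))*(-α))) * M := by ring
    _ = (2:ℝ) ^ ((-(n:ℝ))*2 + (-((n:ℝ)+1))*(-α)) * M := by rw [rpow_combine]
    _ = ((2:ℝ) ^ (α:ℝ) * (2:ℝ) ^ ((α-2)*(n:ℝ))) * M := by rw [rpow_combine]; congr 1; ring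
    _ = (M * (2:ℝ) ^ α) * (2:ℝ) ^ ((α-2)*(n:ℝ)) := by ring

lemma piece_bound {α : ℝ} {θ : ℝ → ℝ} {M : ℝ} (hM : 0 < M) (hθM : ∀ y, θ y ≤ M)
    {φm : Measure ℝ}
    (hφtail : ∀ x : ℝ, 0 < x → φm (Set.Iio (-x)) = ENNReal.ofReal (x ^ (-α) * θ (Real.log x)))
    {s : Set ℝ} (hs : MeasurableSet s) {f : ℝ → ℝ} {b t : ℝ} (ht : 0 < t)
    (hsub : s ⊆ Set.Iio (-t)) (hb : 0 ≤ b) (hbd : ∀ x ∈ s, f x ≤ b) :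
    ∫⁻ x in s, ENNReal.ofReal (f x) ∂φm ≤ ENNReal.ofReal (b * (t ^ (-α) * M)) := by
  calc ∫⁻ x in s, ENNReal.ofReal (f x) ∂φm
      ≤ ∫⁻ _ in s, ENNReal.ofReal b ∂φm :=
        setLIntegral_mono' hs fun x hx => ENNReal.ofReal_le_ofReal (hbd x hx)
    _ = ENNReal.ofReal b * φm s := setLIntegral_const s _
    _ ≤ ENNReal.ofReal b * φm (Set.Iio (-t)) := mul_le_mul_right (measure_mono hsub) _
    _ = ENNReal.ofReal b * ENNReal.ofReal (t ^ (-α) * θ (Real.log t)) := by rw [hφtail t ht]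
    _ ≤ ENNReal.ofReal b * ENNReal.ofReal (t ^ (-α) * M) := by
        exact mul_le_mul_right (ENNReal.ofReal_le_ofReal
          (mul_le_mul_of_nonneg_left (hθM _) (Real.rpow_nonneg (le_of_lt ht) _))) _
    _ = ENNReal.ofReal (b * (t ^ (-α) * M)) := (ENNReal.ofReal_mul hb).symm

lemma key_lintegral {α : ℝ} (hα1 : 1 < α) (hα2 : α < 2) {θ : ℝ → ℝ} {M : ℝ} (hM : 0 < M)
    (hθM : ∀ y, θ y ≤ M) (φm : Measure ℝ)
    (hφtail : ∀ x : ℝ, 0 < x → φm (Set.Iio (-x)) = ENNReal.ofReal (x ^ (-α) * θ (Real.log x))) :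
    ∫⁻ x in Set.Iio (0:ℝ), ENNReal.ofReal (min (x^2) (-x)) ∂φm ≠ ⊤ := by
  have hdisj : Disjoint (Set.Iio (-1:ℝ)) (Set.Ico (-1:ℝ) 0) := by
    refine disjoint_left.mpr fun x hx1 hx2 => ?_
    exact absurd hx2.1 (not_le.mpr hx1)
  rw [← Iio_union_Ico_eq_Iio (show (-1:ℝ) ≤ 0 by norm_num),
    lintegral_union measurableSet_Ico hdisj]
  refine ENNReal.add_ne_top.mpr ⟨?_, ?_⟩
  · -- tail part
    refine ne_top_of_le_ne_top
      (ENNReal.ofReal_ne_top (r := ∑' n : ℕ, (2*M) * ((2:ℝ)^(1-α))^n)) ?_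
    have hsub : Set.Iio (-1:ℝ) ⊆ ⋃ n : ℕ, Set.Ico (-(2:ℝ)^(n+1)) (-(2:ℝ)^n) := by
      intro x hx
      have hx1 : 1 < -x := by have := mem_Iio.mp hx; linarith
      have hP : ∃ n : ℕ, -x ≤ 2^n := by
        obtain ⟨m, hm⟩ := pow_unbounded_of_one_lt (-x) (one_lt_two (α := ℝ))
        exact ⟨m, hm.le⟩
      have hfind := Nat.find_spec hP
      have hne : Nat.find hP ≠ 0 := by
        intro h; rw [h] at hfind; simp at hfind; linarith
      obtain ⟨n₁, hn₁⟩ := Nat.exists_eq_succ_of_ne_zero hne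
      have hmin : ¬(-x ≤ 2^n₁) := Nat.find_min hP (by omega)
      rw [hn₁] at hfind
      simp only [Nat.succ_eq_add_one] at hfind
      refine mem_iUnion.mpr ⟨n₁, ?_⟩
      constructor
      · linarith
      · push_neg at hmin; linarith
    calc ∫⁻ x in Set.Iio (-1:ℝ), ENNReal.ofReal (min (x^2) (-x)) ∂φm
        ≤ ∫⁻ x in Set.Iio (-1:ℝ), ENNReal.ofReal (-x) ∂φm :=
          lintegral_mono fun x => ENNReal.ofReal_le_ofReal (min_le_right _ _)
      _ ≤ ∫⁻ x in ⋃ n : ℕ, Set.Ico (-(2:ℝ)^(n+1)) (-(2:ℝ)^n), ENNReal.ofReal (-x) ∂φm :=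
          lintegral_mono_set hsub
      _ ≤ ∑' n : ℕ, ∫⁻ x in Set.Ico (-(2:ℝ)^(n+1)) (-(2:ℝ)^n), ENNReal.ofReal (-x) ∂φm :=
          lintegral_iUnion_le _ _
      _ ≤ ∑' n : ℕ, ENNReal.ofReal ((2*M) * ((2:ℝ)^(1-α))^n) := by
          refine ENNReal.tsum_le_tsum fun n => ?_
          have h := piece_bound hM hθM hφtail
            (s := Set.Ico (-(2:ℝ)^(n+1)) (-(2:ℝ)^n)) measurableSet_Ico
            (f := fun x => -x) (b := (2:ℝ)^(n+1)) (t := (2:ℝ)^n)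
            (pow_pos two_pos n)
            (fun x hx => mem_Iio.mpr hx.2) (by positivity)
            (fun x hx => by show -x ≤ (2:ℝ)^(n+1); have := hx.1; linarith)
          calc ∫⁻ x in Set.Ico (-(2:ℝ)^(n+1)) (-(2:ℝ)^n), ENNReal.ofReal (-x) ∂φm
              ≤ ENNReal.ofReal ((2:ℝ)^(n+1) * (((2:ℝ)^n) ^ (-α) * M)) := h
            _ = ENNReal.ofReal ((2*M) * ((2:ℝ)^(1-α))^n) := by rw [tail_term_eq]
      _ = ENNReal.ofReal (∑' n : ℕ, (2*M) * ((2:ℝ)^(1-α))^n) := by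
          rw [ENNReal.ofReal_tsum_of_nonneg]
          · intro n; positivity
          · exact (summable_geometric_of_lt_one
              (le_of_lt (Real.rpow_pos_of_pos two_pos _))
              (Real.rpow_lt_one_of_one_lt_of_neg one_lt_two (by linarith))).mul_left _
  · -- near-zero part
    refine ne_top_of_le_ne_top
      (ENNReal.ofReal_ne_top (r := ∑' n : ℕ, (M * (2:ℝ)^α) * ((2:ℝ)^(α-2))^n)) ?_
    have hsub : Set.Ico (-1:ℝ) 0 ⊆ ⋃ n : ℕ, Set.Ico (-(1/(2:ℝ)^n)) (-(1/(2:ℝ)^(n+1))) := by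
      intro x hx
      obtain ⟨hxl, hxr⟩ := hx
      have hx0 : 0 < -x := by linarith
      have hx1 : -x ≤ 1 := by linarith
      have hP : ∃ n : ℕ, 1/(2:ℝ)^n < -x := by
        obtain ⟨m, hm⟩ := pow_unbounded_of_one_lt (1/(-x)) (one_lt_two (α := ℝ))
        refine ⟨m, ?_⟩
        have hp : (0:ℝ) < 2^m := pow_pos two_pos m
        rw [div_lt_iff₀ hp, mul_comm]
        rwa [div_lt_iff₀ hx0] at hm
      have hfind := Nat.find_spec hP
      have hne : Nat.find hP ≠ 0 := by
        intro h; rw [h] at hfind; norm_num at hfind; linarith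
      obtain ⟨n₁, hn₁⟩ := Nat.exists_eq_succ_of_ne_zero hne
      have hmin : ¬(1/(2:ℝ)^n₁ < -x) := Nat.find_min hP (by omega)
      rw [hn₁] at hfind
      simp only [Nat.succ_eq_add_one] at hfind
      push_neg at hmin
      refine mem_iUnion.mpr ⟨n₁, ?_⟩
      constructor
      · linarith
      · linarith
    calc ∫⁻ x in Set.Ico (-1:ℝ) 0, ENNReal.ofReal (min (x^2) (-x)) ∂φm
        ≤ ∫⁻ x in Set.Ico (-1:ℝ) 0, ENNReal.ofReal (x^2) ∂φm :=
          lintegral_mono fun x => ENNReal.ofReal_le_ofReal (min_le_left _ _)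
      _ ≤ ∫⁻ x in ⋃ n : ℕ, Set.Ico (-(1/(2:ℝ)^n)) (-(1/(2:ℝ)^(n+1))), ENNReal.ofReal (x^2) ∂φm :=
          lintegral_mono_set hsub
      _ ≤ ∑' n : ℕ, ∫⁻ x in Set.Ico (-(1/(2:ℝ)^n)) (-(1/(2:ℝ)^(n+1))), ENNReal.ofReal (x^2) ∂φm :=
          lintegral_iUnion_le _ _
      _ ≤ ∑' n : ℕ, ENNReal.ofReal ((M * (2:ℝ)^α) * ((2:ℝ)^(α-2))^n) := by
          refine ENNReal.tsum_le_tsum fun n => ?_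
          have hsub2 : Set.Ico (-(1/(2:ℝ)^n)) (-(1/(2:ℝ)^(n+1))) ⊆ Set.Iio (-(1/(2:ℝ)^(n+1))) :=
            fun x hx => mem_Iio.mpr hx.2
          have hbd2 : ∀ x ∈ Set.Ico (-(1/(2:ℝ)^n)) (-(1/(2:ℝ)^(n+1))), x^2 ≤ (1/(2:ℝ)^n)^2 := by
            intro x hx
            have h1 : -(1/(2:ℝ)^n) ≤ x := hx.1
            have h2 : x < 0 := by
              have := hx.2
              have hp : (0:ℝ) < 1/(2:ℝ)^(n+1) := by positivity
              linarith
            have h3 : -x ≤ 1/(2:ℝ)^n := by linarith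
            calc x^2 = (-x)^2 := by ring
              _ ≤ (1/(2:ℝ)^n)^2 := by nlinarith
          have h := piece_bound hM hθM hφtail
            (s := Set.Ico (-(1/(2:ℝ)^n)) (-(1/(2:ℝ)^(n+1)))) measurableSet_Ico
            (f := fun x => x^2) (b := (1/(2:ℝ)^n)^2) (t := 1/(2:ℝ)^(n+1))
            (by positivity) hsub2 (by positivity) hbd2
          calc ∫⁻ x in Set.Ico (-(1/(2:ℝ)^n)) (-(1/(2:ℝ)^(n+1))), ENNReal.ofReal (x^2) ∂φm
              ≤ ENNReal.ofReal ((1/(2:ℝ)^n)^2 * ((1/(2:ℝ)^(n+1)) ^ (-α) * M)) := h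
            _ = ENNReal.ofReal ((M * (2:ℝ)^α) * ((2:ℝ)^(α-2))^n) := by rw [near_term_eq]
      _ = ENNReal.ofReal (∑' n : ℕ, (M * (2:ℝ)^α) * ((2:ℝ)^(α-2))^n) := by
          rw [ENNReal.ofReal_tsum_of_nonneg]
          · intro n; positivity
          · exact (summable_geometric_of_lt_one
              (le_of_lt (Real.rpow_pos_of_pos two_pos _))
              (Real.rpow_lt_one_of_one_lt_of_neg one_lt_two (by linarith))).mul_left _






lemma m_integrable {φm : Measure ℝ}
    (hL : ∫⁻ x in Set.Iio (0:ℝ), ENNReal.ofReal (min (x^2) (-x)) ∂φm ≠ ⊤) :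
    IntegrableOn (fun x : ℝ => min (x^2) (-x)) (Set.Iio (0:ℝ)) φm := by
  constructor
  · exact ((continuous_pow 2).min continuous_neg).aestronglyMeasurable
  · rw [hasFiniteIntegral_iff_ofReal]
    · exact lt_top_iff_ne_top.mpr hL
    · refine ae_restrict_of_forall_mem measurableSet_Iio fun x hx => ?_
      have hx0 : x < 0 := hx
      show (0:ℝ) ≤ min (x^2) (-x)
      exact le_min (pow_two_nonneg x) (by linarith)

lemma integrand_integrable {φm : Measure ℝ}
    (hm : IntegrableOn (fun x : ℝ => min (x^2) (-x)) (Set.Iio (0:ℝ)) φm)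
    (z : ℂ) (hz : z.im ≤ 0) :
    IntegrableOn (fun x : ℝ => Complex.exp (Complex.I * z * x) - 1 - Complex.I * z * x)
      (Set.Iio (0:ℝ)) φm := by
  have hcont : Continuous fun x : ℝ =>
      Complex.exp (Complex.I * z * x) - 1 - Complex.I * z * x := by
    fun_prop
  refine Integrable.mono' (hm.const_mul (3 * (‖z‖ ^ 2 + ‖z‖)))
    hcont.aestronglyMeasurable ?_
  refine ae_restrict_of_forall_mem measurableSet_Iio fun x hx => ?_
  have hx0 : x < 0 := hx
  have hre : (Complex.I * z * (x:ℂ)).re = -z.im * x := by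
    simp [Complex.mul_re, Complex.mul_im]
  have hre0 : (Complex.I * z * (x:ℂ)).re ≤ 0 := by
    rw [hre]; nlinarith
  have h1 := abs_exp_sub_le hre0
  have habs : ‖Complex.I * z * (x:ℂ)‖ = ‖z‖ * (-x) := by
    rw [norm_mul, norm_mul, Complex.norm_I, Complex.norm_real, Real.norm_eq_abs, one_mul, abs_of_nonpos hx0.le]
  have h2 : min (‖Complex.I * z * (x:ℂ)‖ ^ 2) (‖Complex.I * z * (x:ℂ)‖)
      = min ((‖z‖ * x)^2) (-(‖z‖ * x)) := by
    rw [habs, show (‖z‖ * (-x))^2 = (‖z‖ * x)^2 by ring,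
      show ‖z‖ * (-x) = -(‖z‖ * x) by ring]
  have h3 := min_mul_le (k := ‖z‖) (x := x) (norm_nonneg z) hx0.le
  calc ‖Complex.exp (Complex.I * z * x) - 1 - Complex.I * z * x‖
      ≤ 3 * min (‖Complex.I * z * (x:ℂ)‖ ^ 2)
          (‖Complex.I * z * (x:ℂ)‖) := h1
    _ = 3 * min ((‖z‖ * x)^2) (-(‖z‖ * x)) := by rw [h2]
    _ ≤ 3 * ((‖z‖ ^ 2 + ‖z‖) * min (x^2) (-x)) := by linarith
    _ = 3 * (‖z‖ ^ 2 + ‖z‖) * min (x^2) (-x) := by ring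

lemma real_integrand_integrable {φm : Measure ℝ}
    (hm : IntegrableOn (fun x : ℝ => min (x^2) (-x)) (Set.Iio (0:ℝ)) φm)
    {k : ℝ} (hk : 0 ≤ k) :
    IntegrableOn (fun x : ℝ => Real.exp (k*x) - 1 - k*x) (Set.Iio (0:ℝ)) φm := by
  have hcont : Continuous fun x : ℝ => Real.exp (k*x) - 1 - k*x := by fun_prop
  refine Integrable.mono' (hm.const_mul (3 * (k ^ 2 + k)))
    hcont.aestronglyMeasurable ?_
  refine ae_restrict_of_forall_mem measurableSet_Iio fun x hx => ?_
  have hx0 : x < 0 := hx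
  have h1 := abs_exp_sub_le_real (t := k*x) (by nlinarith)
  have h3 := min_mul_le (k := k) (x := x) hk hx0.le
  rw [Real.norm_eq_abs]
  calc |Real.exp (k*x) - 1 - k*x| ≤ 3 * min ((k*x)^2) (-(k*x)) := h1
    _ ≤ 3 * ((k^2 + k) * min (x^2) (-x)) := by linarith
    _ = 3 * (k^2 + k) * min (x^2) (-x) := by ring

lemma psiSemi_on_axis (φm : Measure ℝ) (k : ℝ) :
    psiSemi φm (-(Complex.I * (k:ℂ))) =
      ((∫ x in Set.Iio (0:ℝ), (Real.exp (k*x) - 1 - k*x) ∂φm : ℝ) : ℂ) := by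
  unfold psiSemi
  have hfe : (fun x : ℝ => Complex.exp (Complex.I * -(Complex.I * (k:ℂ)) * (x:ℂ)) - 1
        - Complex.I * -(Complex.I * (k:ℂ)) * (x:ℂ))
      = fun x : ℝ => ((Real.exp (k*x) - 1 - k*x : ℝ) : ℂ) := by
    funext x
    have h1 : Complex.I * -(Complex.I * (k:ℂ)) * (x:ℂ) = ((k*x : ℝ) : ℂ) := by
      rw [mul_neg, ← mul_assoc, Complex.I_mul_I]
      push_cast
      ring
    rw [h1, ← Complex.ofReal_exp]
    push_cast
    ring
  rw [hfe]
  exact integral_ofReal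

lemma integrand_im (z : ℂ) (x : ℝ) :
    (Complex.exp (Complex.I * z * x) - 1 - Complex.I * z * x).im
      = Real.exp (-z.im * x) * Real.sin (z.re * x) - z.re * x := by
  have h1 : (Complex.I * z * (x:ℂ)).re = -z.im * x := by simp [Complex.mul_re, Complex.mul_im]
  have h2 : (Complex.I * z * (x:ℂ)).im = z.re * x := by simp [Complex.mul_re, Complex.mul_im]
  rw [Complex.sub_im, Complex.sub_im, Complex.exp_im, h1, h2, Complex.one_im]
  ring

lemma setIntegral_pos_of_pos {α : ℝ} {θ : ℝ → ℝ} (hθ0 : 0 < θ 0) {φm : Measure ℝ}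
    (hφtail : ∀ x : ℝ, 0 < x → φm (Set.Iio (-x)) = ENNReal.ofReal (x ^ (-α) * θ (Real.log x)))
    {f : ℝ → ℝ} (hf_int : IntegrableOn f (Set.Iio (0:ℝ)) φm)
    (hf_pos : ∀ x : ℝ, x < 0 → 0 < f x) :
    0 < ∫ x in Set.Iio (0:ℝ), f x ∂φm := by
  have hμ1 : φm (Set.Iio (-1:ℝ)) = ENNReal.ofReal (θ 0) := by
    have h := hφtail 1 one_pos
    rwa [Real.one_rpow, Real.log_one, one_mul] at h
  have hae : 0 ≤ᵐ[φm.restrict (Set.Iio (0:ℝ))] f :=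
    ae_restrict_of_forall_mem measurableSet_Iio fun x hx => (hf_pos x hx).le
  refine (integral_pos_iff_support_of_nonneg_ae hae hf_int).mpr ?_
  have hsub : Set.Iio (-1:ℝ) ⊆ Function.support f :=
    fun x hx => (hf_pos x (by have := mem_Iio.mp hx; linarith)).ne'
  calc (0:ENNReal) < ENNReal.ofReal (θ 0) := ENNReal.ofReal_pos.mpr hθ0
    _ = φm (Set.Iio (-1:ℝ)) := hμ1.symm
    _ = φm.restrict (Set.Iio (0:ℝ)) (Set.Iio (-1:ℝ)) := by
        rw [Measure.restrict_apply measurableSet_Iio]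
        congr 1
        exact (inter_eq_self_of_subset_left
          (fun x hx => lt_trans (mem_Iio.mp hx) (by norm_num))).symm
    _ ≤ φm.restrict (Set.Iio (0:ℝ)) (Function.support f) := measure_mono hsub


lemma g_pos {k x : ℝ} (hk : 0 < k) (hx : x < 0) : 0 < Real.exp (k*x) - 1 - k*x := by
  have hkx : k*x < 0 := mul_neg_of_pos_of_neg hk hx
  have h := Real.add_one_lt_exp (x := k*x) hkx.ne
  linarith

lemma g_strictMono {k₁ k₂ x : ℝ} (h1 : 0 < k₁) (h12 : k₁ < k₂) (hx : x < 0) :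
    Real.exp (k₁*x) - 1 - k₁*x < Real.exp (k₂*x) - 1 - k₂*x := by
  have hδ : 0 < k₂ - k₁ := by linarith
  have he : Real.exp (k₂*x) = Real.exp (k₁*x) * Real.exp ((k₂-k₁)*x) := by
    rw [← Real.exp_add]; ring_nf
  have h2 : (k₂-k₁)*x + 1 < Real.exp ((k₂-k₁)*x) :=
    Real.add_one_lt_exp (mul_neg_of_pos_of_neg hδ hx).ne
  have h3 : 0 < Real.exp (k₁*x) := Real.exp_pos _
  have h4 : Real.exp (k₁*x) < 1 :=
    Real.exp_lt_one_iff.mpr (mul_neg_of_pos_of_neg h1 hx)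
  nlinarith [mul_lt_mul_of_pos_left h2 h3,
    mul_pos (mul_pos hδ (neg_pos.mpr hx)) (sub_pos.mpr h4)]

lemma h_pos {a k x : ℝ} (ha : 0 < a) (hk : 0 < k) (hx : x < 0) :
    0 < Real.exp (k*x) * Real.sin (a*x) - a*x := by
  have hax : a*x < 0 := mul_neg_of_pos_of_neg ha hx
  have hexp1 : Real.exp (k*x) < 1 :=
    Real.exp_lt_one_iff.mpr (mul_neg_of_pos_of_neg hk hx)
  have hexp0 : 0 < Real.exp (k*x) := Real.exp_pos _
  rcases le_or_gt 0 (Real.sin (a*x)) with hs | hs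
  · nlinarith [mul_nonneg hexp0.le hs]
  · have habs : |Real.sin (a*x)| ≤ |a*x| := Real.abs_sin_le_abs (x := a*x)
    rw [abs_of_neg hs, abs_of_neg hax] at habs
    nlinarith [mul_pos (sub_pos.mpr hexp1) (neg_pos.mpr hs)]


end PsiAux

/-- Lemma 4.1: for every `s > 0` there is a unique `z` in the open lower
half-plane with `ψ(z) = s`, and it lies on the negative imaginary axis: `z = -i ξ(s)`
for a unique `ξ(s) > 0`. -/
theorem psiSemi_unique_pole
    (α c : ℝ) (hα : 1 < α ∧ α < 2) (hc : 1 < c)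
    (θ : ℝ → ℝ) (hθc : Continuous θ) (hθpos : ∀ y : ℝ, 0 < θ y)
    (hθper : Function.Periodic θ (Real.log (c ^ (1 / α))))
    (hθmono : AntitoneOn (fun x : ℝ => x ^ (-α) * θ (Real.log x)) (Set.Ioi 0))
    (φm : MeasureTheory.Measure ℝ)
    (hφtail : ∀ x : ℝ, 0 < x → φm (Set.Iio (-x)) = ENNReal.ofReal (x ^ (-α) * θ (Real.log x)))
    (hφsupp : φm (Set.Ici 0) = 0) :
    ∀ s : ℝ, 0 < s →
      (∃! z : ℂ, z.im < 0 ∧ psiSemi φm z = (s : ℂ)) ∧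
      (∀ z : ℂ, z.im < 0 → psiSemi φm z = (s : ℂ) →
        ∃ k : ℝ, 0 < k ∧ z = -(Complex.I * (k : ℂ))) ∧
      (∃! k : ℝ, 0 < k ∧ psiSemi φm (-(Complex.I * (k : ℂ))) = (s : ℂ)) := by
  obtain ⟨hα1, hα2⟩ := hα
  have hc0 : (0:ℝ) < c := lt_trans one_pos hc
  have hT : 0 < Real.log (c ^ (1 / α)) := by
    apply Real.log_pos
    rw [Real.one_lt_rpow_iff_of_pos hc0]
    exact Or.inl ⟨hc, by positivity⟩
  obtain ⟨M, hM, hθM⟩ := PsiAux.theta_bdd hθc hT hθper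
  have hL := PsiAux.key_lintegral hα1 hα2 hM hθM φm hφtail
  have hm := PsiAux.m_integrable hL
  have hθ0 : 0 < θ 0 := hθpos 0
  set M0 : ℝ := ∫ x in Set.Iio (0:ℝ), min (x^2) (-x) ∂φm with hM0def
  have hM0 : 0 ≤ M0 := by
    rw [hM0def]
    refine integral_nonneg_of_ae (ae_restrict_of_forall_mem measurableSet_Iio fun x hx => ?_)
    have hx0 : x < 0 := hx
    show (0:ℝ) ≤ min (x^2) (-x)
    exact le_min (pow_two_nonneg x) (by linarith)
  set F : ℝ → ℝ := fun k => ∫ x in Set.Iio (0:ℝ), (Real.exp (k*x) - 1 - k*x) ∂φm with hFdef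
  have hFint : ∀ k : ℝ, 0 ≤ k →
      IntegrableOn (fun x => Real.exp (k*x) - 1 - k*x) (Set.Iio (0:ℝ)) φm :=
    fun k hk => PsiAux.real_integrand_integrable hm hk
  have hμ1 : φm (Set.Iio (-1:ℝ)) = ENNReal.ofReal (θ 0) := by
    have h := hφtail 1 one_pos
    rwa [Real.one_rpow, Real.log_one, one_mul] at h
  have hμ1' : (φm (Set.Iio (-1:ℝ))).toReal = θ 0 := by
    rw [hμ1, ENNReal.toReal_ofReal hθ0.le]
  -- strict monotonicity of F on (0, ∞)
  have hFmono : ∀ k₁ k₂ : ℝ, 0 < k₁ → k₁ < k₂ → F k₁ < F k₂ := by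
    intro k₁ k₂ hk1 h12
    have hdiff : 0 < ∫ x in Set.Iio (0:ℝ),
        ((Real.exp (k₂*x) - 1 - k₂*x) - (Real.exp (k₁*x) - 1 - k₁*x)) ∂φm := by
      refine PsiAux.setIntegral_pos_of_pos (α := α) hθ0 hφtail
        ((hFint k₂ (by linarith)).sub (hFint k₁ hk1.le)) (fun x hx => ?_)
      have := PsiAux.g_strictMono hk1 h12 hx
      linarith
    rw [integral_sub (hFint k₂ (by linarith)) (hFint k₁ hk1.le)] at hdiff
    simp only [hFdef]
    linarith
  -- upper bound for small k
  have hFle : ∀ k : ℝ, 0 ≤ k → F k ≤ 3*(k^2+k) * M0 := by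
    intro k hk
    have hptw : ∀ x ∈ Set.Iio (0:ℝ),
        Real.exp (k*x) - 1 - k*x ≤ 3*(k^2+k) * min (x^2) (-x) := by
      intro x hx
      have hx0 : x < 0 := hx
      have h1 := PsiAux.abs_exp_sub_le_real (t := k*x)
        (mul_nonpos_of_nonneg_of_nonpos hk hx0.le)
      have h2 := PsiAux.min_mul_le (k := k) (x := x) hk hx0.le
      have h3 := le_abs_self (Real.exp (k*x) - 1 - k*x)
      linarith
    simp only [hFdef]
    calc (∫ x in Set.Iio (0:ℝ), (Real.exp (k*x) - 1 - k*x) ∂φm)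
        ≤ ∫ x in Set.Iio (0:ℝ), 3*(k^2+k) * min (x^2) (-x) ∂φm := by
          refine integral_mono_ae (hFint k hk) (hm.const_mul _)
            (ae_restrict_of_forall_mem measurableSet_Iio hptw)
      _ = 3*(k^2+k) * M0 := by rw [integral_const_mul, hM0def]
  -- lower bound for large k
  have hFge : ∀ k : ℝ, 1 ≤ k → (k - 1) * θ 0 ≤ F k := by
    intro k hk
    have hk0 : (0:ℝ) < k := by linarith
    have hnn : 0 ≤ᵐ[φm.restrict (Set.Iio (0:ℝ))] fun x => Real.exp (k*x) - 1 - k*x :=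
      ae_restrict_of_forall_mem measurableSet_Iio fun x hx => (PsiAux.g_pos hk0 hx).le
    have hsub1 : Set.Iio (-1:ℝ) ⊆ Set.Iio (0:ℝ) :=
      fun x hx => lt_trans (mem_Iio.mp hx) (by norm_num)
    have h1 : ∫ x in Set.Iio (-1:ℝ), (Real.exp (k*x) - 1 - k*x) ∂φm ≤ F k := by
      simp only [hFdef]
      exact setIntegral_mono_set (hFint k hk0.le) hnn (HasSubset.Subset.eventuallyLE hsub1)
    have h2 : (k-1) * (φm (Set.Iio (-1:ℝ))).toReal
        ≤ ∫ x in Set.Iio (-1:ℝ), (Real.exp (k*x) - 1 - k*x) ∂φm := by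
      refine setIntegral_ge_of_const_le_real measurableSet_Iio
        (by rw [hμ1]; exact ENNReal.ofReal_ne_top) (fun x hx => ?_)
        ((hFint k hk0.le).mono_set hsub1)
      have hx1 : x < -1 := hx
      have h3 : 0 < Real.exp (k*x) := Real.exp_pos _
      nlinarith
    rw [hμ1'] at h2
    linarith
  -- continuity of F at positive points
  have hFcont : ∀ k : ℝ, 0 < k → ContinuousAt F k := by
    intro k hk
    simp only [hFdef]
    refine MeasureTheory.continuousAt_of_dominated
      (bound := fun x => 3*((2*k)^2+2*k) * min (x^2) (-x))
      (Eventually.of_forall fun k' => Continuous.aestronglyMeasurable (by fun_prop)) ?_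
      (hm.const_mul _)
      (Eventually.of_forall fun x => Continuous.continuousAt (by fun_prop))
    refine Filter.eventually_of_mem (Ioo_mem_nhds hk (by linarith : k < 2*k)) ?_
    intro k' hk'
    refine ae_restrict_of_forall_mem measurableSet_Iio fun x hx => ?_
    have hx0 : x < 0 := hx
    have hk'0 : 0 < k' := hk'.1
    have hk'2 : k' < 2*k := hk'.2
    have h1 := PsiAux.abs_exp_sub_le_real (t := k'*x)
      (mul_nonpos_of_nonneg_of_nonpos hk'0.le hx0.le)
    have h2 := PsiAux.min_mul_le (k := k') (x := x) hk'0.le hx0.le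
    have hmin0 : 0 ≤ min (x^2) (-x) := le_min (pow_two_nonneg x) (by linarith)
    have h4 : (k'^2 + k') * min (x^2) (-x) ≤ ((2*k)^2 + 2*k) * min (x^2) (-x) := by
      refine mul_le_mul_of_nonneg_right ?_ hmin0
      nlinarith
    show ‖Real.exp (k'*x) - 1 - k'*x‖ ≤ 3*((2*k)^2+2*k) * min (x^2) (-x)
    rw [Real.norm_eq_abs]
    linarith
  -- relation between psiSemi on the axis and F
  have hψax : ∀ k : ℝ, psiSemi φm (-(Complex.I * (k:ℂ))) = ((F k : ℝ) : ℂ) := by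
    intro k
    rw [PsiAux.psiSemi_on_axis φm k]
  intro s hs
  -- small point
  set k₀ : ℝ := min 1 (s / (12*(M0+1))) with hk₀def
  have hk₀pos : 0 < k₀ := lt_min one_pos (by positivity)
  have hk₀le1 : k₀ ≤ 1 := min_le_left _ _
  have hFk₀ : F k₀ < s := by
    have h1 : F k₀ ≤ 3*(k₀^2+k₀)*M0 := hFle k₀ hk₀pos.le
    have hk2 : k₀^2 ≤ k₀ := by nlinarith
    have h3 : k₀ * (12*(M0+1)) ≤ s := by
      have := min_le_right (1:ℝ) (s / (12*(M0+1)))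
      calc k₀ * (12*(M0+1)) ≤ (s / (12*(M0+1))) * (12*(M0+1)) := by
            refine mul_le_mul_of_nonneg_right ?_ (by positivity)
            rw [hk₀def]; exact this
        _ = s := by field_simp
    nlinarith [mul_le_mul_of_nonneg_right hk2 hM0, hk₀pos.le]
  -- large point
  set k₁ : ℝ := max 2 (s / θ 0 + 2) with hk₁def
  have hk₁2 : 2 ≤ k₁ := le_max_left _ _
  have hFk₁ : s < F k₁ := by
    have h1 := hFge k₁ (by linarith)
    have h2 : s / θ 0 + 2 ≤ k₁ := le_max_right _ _
    have hd : s / θ 0 < k₁ - 1 := by linarith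
    rw [div_lt_iff₀ hθ0] at hd
    nlinarith
  have hk₀k₁ : k₀ ≤ k₁ := by linarith
  have hcont : ContinuousOn F (Set.Icc k₀ k₁) :=
    fun x hx => (hFcont x (lt_of_lt_of_le hk₀pos hx.1)).continuousWithinAt
  obtain ⟨ξ, hξmem, hξval⟩ :=
    intermediate_value_Icc hk₀k₁ hcont (mem_Icc.mpr ⟨hFk₀.le, hFk₁.le⟩)
  have hξpos : 0 < ξ := lt_of_lt_of_le hk₀pos hξmem.1
  -- injectivity of F on positives
  have hFinj : ∀ k k' : ℝ, 0 < k → 0 < k' → F k = s → F k' = s → k = k' := by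
    intro k k' hk hk' h1 h2
    rcases lt_trichotomy k k' with h | h | h
    · have := hFmono k k' hk h; rw [h1, h2] at this; exact absurd this (lt_irrefl s)
    · exact h
    · have := hFmono k' k hk' h; rw [h1, h2] at this; exact absurd this (lt_irrefl s)
  -- axis characterization
  have haxis : ∀ z : ℂ, z.im < 0 → psiSemi φm z = (s:ℂ) →
      ∃ k : ℝ, 0 < k ∧ z = -(Complex.I * (k:ℂ)) := by
    intro z hzim hz
    have hk : 0 < -z.im := by linarith
    have hint := PsiAux.integrand_integrable hm z hzim.le
    have hIm := _root_.integral_im (𝕜 := ℂ) hint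
    simp only [RCLike.im_to_complex] at hIm
    have him0 : (psiSemi φm z).im = 0 := by rw [hz]; exact Complex.ofReal_im s
    have him2 : (psiSemi φm z).im
        = ∫ x in Set.Iio (0:ℝ), (Real.exp (-z.im*x) * Real.sin (z.re*x) - z.re*x) ∂φm := by
      unfold psiSemi
      rw [← hIm]
      exact integral_congr_ae (Eventually.of_forall fun x => PsiAux.integrand_im z x)
    have hintim : IntegrableOn
        (fun x : ℝ => Real.exp (-z.im*x) * Real.sin (z.re*x) - z.re*x) (Set.Iio (0:ℝ)) φm := by
      have h := hint.im
      simp only [RCLike.im_to_complex] at h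
      exact h.congr (Eventually.of_forall fun x => PsiAux.integrand_im z x)
    have hre0 : z.re = 0 := by
      by_contra hre
      rcases lt_or_gt_of_ne hre with hneg | hpos
      · have hposall : ∀ x : ℝ, x < 0 →
            0 < -(Real.exp (-z.im*x) * Real.sin (z.re*x) - z.re*x) := by
          intro x hx
          have h := PsiAux.h_pos (a := -z.re) (k := -z.im) (by linarith) hk hx
          rw [show (-z.re)*x = -(z.re*x) by ring, Real.sin_neg] at h
          nlinarith
        have hposint := PsiAux.setIntegral_pos_of_pos (α := α) hθ0 hφtail hintim.neg hposall
        simp only [Pi.neg_apply] at hposint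
        rw [integral_neg] at hposint
        rw [him2] at him0
        linarith
      · have hposall : ∀ x : ℝ, x < 0 →
            0 < Real.exp (-z.im*x) * Real.sin (z.re*x) - z.re*x := by
          intro x hx
          exact PsiAux.h_pos (a := z.re) (k := -z.im) hpos hk hx
        have hposint := PsiAux.setIntegral_pos_of_pos (α := α) hθ0 hφtail hintim hposall
        rw [him2] at him0
        linarith
    refine ⟨-z.im, hk, ?_⟩
    apply Complex.ext
    · simp [hre0]
    · simp
  -- value at ξ
  have hξs : psiSemi φm (-(Complex.I * (ξ:ℂ))) = (s:ℂ) := by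
    rw [hψax, hξval]
  refine ⟨?_, haxis, ?_⟩
  · refine ⟨-(Complex.I * (ξ:ℂ)), ⟨by simpa using hξpos, hξs⟩, ?_⟩
    rintro z' ⟨him', hval'⟩
    obtain ⟨k', hk', rfl⟩ := haxis z' him' hval'
    have hFk' : F k' = s := by
      have h := hval'
      rw [hψax] at h
      exact_mod_cast h
    rw [hFinj k' ξ hk' hξpos hFk' hξval]
  · refine ⟨ξ, ⟨hξpos, hξs⟩, ?_⟩
    rintro k' ⟨hk', hv'⟩
    have hFk' : F k' = s := by
      rw [hψax] at hv'
      exact_mod_cast hv'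
    exact hFinj k' ξ hk' hξpos hFk' hξval
end

section
/- Let α ∈ (1,2), c > 1, θ admissible, φ the measure on (−∞,0) with φ((−∞,−x)) = x^{−α}θ(log x), ψ(z) = ∫_{(−∞,0)} (e^{izx} − 1 − izx) dφ(x), and for s > 0 let ξ(s) > 0 be the unique positive real with ψ(−i·ξ(s)) = s. Then ξ: (0,∞) → (0,∞) is continuously differentiable and strictly increasing, satisfies ξ(c·s) = c^{1/α}·ξ(s) for all s > 0, and the function g(x) := e^{−x/α}·ξ(e^x) is log(c)-periodic, i.e. g(x + log c) = g(x) for all x ∈ ℝ; equivalently ξ(s) = s^{1/α}·g(log s). -/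
open MeasureTheory Set Filter

/-- The log-periodic factor `g(x) = e^{-x/α} ξ(e^x)`. -/
noncomputable def gFun (α : ℝ) (ξ : ℝ → ℝ) (x : ℝ) : ℝ :=
  Real.exp (-x / α) * ξ (Real.exp x)

/-- `fS k x = e^{kx} - 1 - kx`. -/
noncomputable def fS (k x : ℝ) : ℝ := Real.exp (k * x) - 1 - k * x

lemma fS_nonneg (k x : ℝ) : 0 ≤ fS k x := by
  have := Real.add_one_le_exp (k * x); simp only [fS]; linarith

lemma fS_pos {k x : ℝ} (hk : 0 < k) (hx : x < 0) : 0 < fS k x := by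
  have h := Real.add_one_lt_exp (mul_ne_zero hk.ne' hx.ne)
  simp only [fS]; linarith

lemma fS_cont (k : ℝ) : Continuous (fS k) := by
  unfold fS; fun_prop

lemma fS_mono {k₁ k₂ x : ℝ} (hx : x ≤ 0) (h0 : 0 ≤ k₁) (h : k₁ ≤ k₂) :
    fS k₁ x ≤ fS k₂ x := by
  simp only [fS]
  have hba : k₂ * x ≤ k₁ * x := mul_le_mul_of_nonpos_right h hx
  have ha : k₁ * x ≤ 0 := mul_nonpos_of_nonneg_of_nonpos h0 hx
  have h1 : (k₂ * x - k₁ * x) + 1 ≤ Real.exp (k₂ * x - k₁ * x) := Real.add_one_le_exp _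
  have h2 : Real.exp (k₁ * x) * Real.exp (k₂ * x - k₁ * x) = Real.exp (k₂ * x) := by
    rw [← Real.exp_add]; ring_nf
  have h3 : Real.exp (k₁ * x) ≤ 1 := Real.exp_le_one_iff.2 ha
  nlinarith [Real.exp_pos (k₁ * x),
    mul_le_mul_of_nonneg_left h1 (Real.exp_pos (k₁ * x)).le,
    mul_nonneg (sub_nonneg.2 hba) (sub_nonneg.2 h3)]

lemma fS_strict_mono {k₁ k₂ x : ℝ} (hx : x < 0) (h0 : 0 < k₁) (h : k₁ < k₂) :
    fS k₁ x < fS k₂ x := by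
  simp only [fS]
  have hba : k₂ * x < k₁ * x := by nlinarith
  have ha : k₁ * x < 0 := mul_neg_of_pos_of_neg h0 hx
  have h1 : (k₂ * x - k₁ * x) + 1 < Real.exp (k₂ * x - k₁ * x) :=
    Real.add_one_lt_exp (by nlinarith)
  have h2 : Real.exp (k₁ * x) * Real.exp (k₂ * x - k₁ * x) = Real.exp (k₂ * x) := by
    rw [← Real.exp_add]; ring_nf
  have h3 : Real.exp (k₁ * x) ≤ 1 := Real.exp_le_one_iff.2 ha.le
  nlinarith [Real.exp_pos (k₁ * x),
    mul_lt_mul_of_pos_left h1 (Real.exp_pos (k₁ * x)),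
    mul_nonneg (sub_nonneg.2 hba.le) (sub_nonneg.2 h3)]

/-- Key inequality: `0 ≤ 3 e^{-u} + u e^{-u} + 2u - 3` for `u ≥ 0`. -/
lemma aux_exp_ineq (u : ℝ) (hu : 0 ≤ u) :
    0 ≤ 3 * Real.exp (-u) + u * Real.exp (-u) + 2 * u - 3 := by
  set H : ℝ → ℝ := fun v => 3 * Real.exp (-v) + v * Real.exp (-v) + 2 * v - 3 with hH
  have hder : ∀ t : ℝ, HasDerivAt H (2 - (2 + t) * Real.exp (-t)) t := by
    intro t
    have he : HasDerivAt (fun v : ℝ => Real.exp (-v)) (-Real.exp (-t)) t := by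
      have h := (Real.hasDerivAt_exp (-t)).comp t (hasDerivAt_neg t)
      simp at h; exact h
    have h1 : HasDerivAt (fun v : ℝ => 3 * Real.exp (-v)) (3 * -Real.exp (-t)) t :=
      he.const_mul 3
    have h2 : HasDerivAt (fun v : ℝ => v * Real.exp (-v))
        (1 * Real.exp (-t) + t * -Real.exp (-t)) t :=
      (hasDerivAt_id t).mul he
    have h3 : HasDerivAt (fun v : ℝ => 2 * v) 2 t := by
      simpa using (hasDerivAt_id t).const_mul 2
    have := ((h1.add h2).add h3).sub_const 3
    exact this.congr_deriv (by ring)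
  have hmono : MonotoneOn H (Set.Ici (0:ℝ)) := by
    apply monotoneOn_of_deriv_nonneg (convex_Ici 0)
    · exact Continuous.continuousOn (by fun_prop)
    · intro t _
      exact (hder t).differentiableAt.differentiableWithinAt
    · intro t ht
      rw [interior_Ici] at ht
      rw [(hder t).deriv]
      have h1 := Real.add_one_le_exp t
      have h2 : Real.exp (-t) * Real.exp t = 1 := by rw [← Real.exp_add]; simp
      have h3 := Real.exp_pos t
      have h4 := Real.exp_pos (-t)
      have ht' : (0:ℝ) < t := ht
      nlinarith
  have h0 : H 0 = 0 := by simp [hH]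
  have := hmono (Set.self_mem_Ici) hu hu
  rw [h0] at this
  exact this

lemma fS_deriv_bound {k x : ℝ} (hk : 0 < k) (hx : x ≤ 0) :
    |Real.exp (k * x) * x - x| ≤ 3 / k * fS k x := by
  have hkx : k * x ≤ 0 := mul_nonpos_of_nonneg_of_nonpos hk.le hx
  have hv1 : Real.exp (k * x) ≤ 1 := Real.exp_le_one_iff.2 hkx
  have habs : |Real.exp (k * x) * x - x| = Real.exp (k * x) * x - x := by
    apply abs_of_nonneg; nlinarith [mul_nonneg (neg_nonneg.2 hx) (sub_nonneg.2 hv1)]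
  have key := aux_exp_ineq (-(k * x)) (by linarith)
  rw [neg_neg] at key
  -- key : 0 ≤ 3 * exp (k*x) + (-(k*x)) * exp (k*x) + 2*(-(k*x)) - 3
  rw [habs]
  rw [div_mul_eq_mul_div, le_div_iff₀ hk]
  simp only [fS]
  nlinarith

/-- Two measures on `ℝ` vanishing on `[0,∞)` and agreeing (finitely) on rays
`(-∞, t)`, `t < 0`, are equal. -/
lemma measure_ext_neg (ν₁ ν₂ : Measure ℝ)
    (h₁ : ν₁ (Ici 0) = 0) (h₂ : ν₂ (Ici 0) = 0)
    (hfin : ∀ t : ℝ, t < 0 → ν₁ (Iio t) ≠ ⊤)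
    (h : ∀ t : ℝ, t < 0 → ν₁ (Iio t) = ν₂ (Iio t)) : ν₁ = ν₂ := by
  have hIic : ∀ t : ℝ, t < 0 → ν₁ (Iic t) = ν₂ (Iic t) := by
    intro t ht
    set r : ℕ → ℝ := fun n => t - t / ((n : ℝ) + 2) with hr
    have hd : ∀ n : ℕ, (0:ℝ) < (n:ℝ) + 2 := fun n => by positivity
    have hrneg : ∀ n : ℕ, r n < 0 := by
      intro n
      have hdd : t / ((n:ℝ) + 2) * ((n:ℝ) + 2) = t := div_mul_cancel₀ t (hd n).ne'
      simp only [hr]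
      nlinarith [hd n]
    have hrt : ∀ n : ℕ, t < r n := by
      intro n
      have : t / ((n:ℝ)+2) < 0 := div_neg_of_neg_of_pos ht (hd n)
      simp only [hr]; linarith
    have hanti : Antitone fun n : ℕ => Iio (r n) := by
      intro n m hnm
      apply Iio_subset_Iio
      simp only [hr]
      have h1 : ((n:ℝ) + 2) ≤ ((m:ℝ) + 2) := by
        have : (n:ℝ) ≤ (m:ℝ) := by exact_mod_cast hnm
        linarith
      have h5 : 1/((m:ℝ)+2) ≤ 1/((n:ℝ)+2) := one_div_le_one_div_of_le (hd n) h1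
      have h6 := mul_le_mul_of_nonpos_left h5 ht.le
      rw [mul_one_div, mul_one_div] at h6
      linarith
    have hinter : ⋂ n : ℕ, Iio (r n) = Iic t := by
      ext x
      simp only [mem_iInter, mem_Iio, mem_Iic]
      constructor
      · intro hx
        by_contra hxt
        push_neg at hxt
        obtain ⟨n, hn⟩ := exists_nat_ge (-t / (x - t))
        have hxt' : 0 < x - t := by linarith
        have h2 : -t / (x - t) ≤ (n:ℝ) + 2 := by linarith
        have h1 : -t ≤ (x - t) * ((n:ℝ) + 2) := by
          calc -t = (-t/(x-t)) * (x-t) := (div_mul_cancel₀ _ hxt'.ne').symm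
          _ ≤ ((n:ℝ)+2) * (x-t) := mul_le_mul_of_nonneg_right h2 hxt'.le
          _ = (x-t) * ((n:ℝ)+2) := mul_comm _ _
        have h3 : r n ≤ x := by
          simp only [hr]
          have h4 : -t / ((n:ℝ)+2) ≤ x - t := by
            rw [div_le_iff₀ (hd n)]; linarith
          rw [neg_div] at h4
          linarith
        exact absurd (hx n) (not_lt.2 h3)
      · intro hx n; exact lt_of_le_of_lt hx (hrt n)
    have hmeas₁ : ν₁ (Iic t) = ⨅ n, ν₁ (Iio (r n)) := by
      rw [← hinter]
      exact Directed.measure_iInter (fun n => measurableSet_Iio.nullMeasurableSet)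
        hanti.directed_ge ⟨0, hfin (r 0) (hrneg 0)⟩
    have hmeas₂ : ν₂ (Iic t) = ⨅ n, ν₂ (Iio (r n)) := by
      rw [← hinter]
      refine Directed.measure_iInter (fun n => measurableSet_Iio.nullMeasurableSet)
        hanti.directed_ge ⟨0, ?_⟩
      rw [← h (r 0) (hrneg 0)]; exact hfin _ (hrneg 0)
    rw [hmeas₁, hmeas₂]
    exact iInf_congr fun n => h (r n) (hrneg n)
  have hres : ∀ ε : ℝ, ε < 0 → ν₁.restrict (Iic ε) = ν₂.restrict (Iic ε) := by
    intro ε hε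
    have hsub : Iic ε ⊆ Iio (ε/2) := fun x hx => lt_of_le_of_lt (mem_Iic.1 hx) (by linarith : ε < ε/2)
    have : IsFiniteMeasure (ν₁.restrict (Iic ε)) := by
      constructor
      rw [Measure.restrict_apply_univ]
      exact lt_of_le_of_lt (measure_mono hsub)
        (lt_top_iff_ne_top.2 (hfin (ε/2) (by linarith)))
    refine Measure.ext_of_Iic _ _ (fun a => ?_)
    rw [Measure.restrict_apply measurableSet_Iic, Measure.restrict_apply measurableSet_Iic,
      Iic_inter_Iic]
    exact hIic _ (lt_of_le_of_lt (min_le_right a ε) hε)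
  ext S hS
  have key : ∀ (ν : Measure ℝ), ν (Ici 0) = 0 →
      ν S = ⨆ n : ℕ, ν (S ∩ Iic (-(1 / ((n:ℝ) + 1)))) := by
    intro ν hν
    have h1 : ν S = ν (S ∩ Iio 0) := by
      have hz : ν (S ∩ Ici 0) = 0 := measure_mono_null inter_subset_right hν
      have hsplit : ν (S ∩ Ici 0) + ν (S \ Ici 0) = ν S :=
        measure_inter_add_diff S measurableSet_Ici
      have hdiff : S \ Ici 0 = S ∩ Iio 0 := by
        ext x; simp [mem_diff, mem_Iio, not_le, and_comm]
      rw [hdiff] at hsplit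
      rw [← hsplit, hz, zero_add]
    have hU : S ∩ Iio 0 = ⋃ n : ℕ, S ∩ Iic (-(1 / ((n:ℝ) + 1))) := by
      ext x
      simp only [mem_inter_iff, mem_Iio, mem_iUnion, mem_Iic]
      constructor
      · rintro ⟨hxS, hx0⟩
        obtain ⟨n, hn⟩ := exists_nat_ge (1 / (-x))
        refine ⟨n, hxS, ?_⟩
        have hx' : 0 < -x := by linarith
        have h2 : 1 / (-x) ≤ (n:ℝ) + 1 := by linarith
        have h3 : 1 / ((n:ℝ)+1) ≤ -x := by
          rw [div_le_iff₀ (by positivity)]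
          calc (1:ℝ) = (1/(-x)) * (-x) := (div_mul_cancel₀ 1 hx'.ne').symm
          _ ≤ ((n:ℝ)+1) * (-x) := mul_le_mul_of_nonneg_right h2 hx'.le
          _ = -x * ((n:ℝ)+1) := mul_comm _ _
        linarith
      · rintro ⟨n, hxS, hxn⟩
        refine ⟨hxS, ?_⟩
        have : (0:ℝ) < 1/((n:ℝ)+1) := by positivity
        linarith
    have hmono : Monotone fun n : ℕ => S ∩ Iic (-(1 / ((n:ℝ) + 1))) := by
      intro n m hnm
      apply inter_subset_inter_right
      apply Iic_subset_Iic.2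
      have h1 : ((n:ℝ)+1) ≤ (m:ℝ)+1 := by
        have : (n:ℝ) ≤ (m:ℝ) := by exact_mod_cast hnm
        linarith
      have := one_div_le_one_div_of_le (by positivity : (0:ℝ) < (n:ℝ)+1) h1
      linarith
    rw [h1, hU]
    exact Directed.measure_iUnion hmono.directed_le
  rw [key ν₁ h₁, key ν₂ h₂]
  refine iSup_congr fun n => ?_
  have hε : -(1 / ((n:ℝ)+1)) < 0 := by
    have : (0:ℝ) < 1/((n:ℝ)+1) := by positivity
    linarith
  calc ν₁ (S ∩ Iic (-(1 / ((n:ℝ) + 1))))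
      = (ν₁.restrict (Iic (-(1 / ((n:ℝ) + 1))))) S := (Measure.restrict_apply hS).symm
    _ = (ν₂.restrict (Iic (-(1 / ((n:ℝ) + 1))))) S := by rw [hres _ hε]
    _ = ν₂ (S ∩ Iic (-(1 / ((n:ℝ) + 1)))) := Measure.restrict_apply hS

section Scaling

variable {α c : ℝ} {θ : ℝ → ℝ} {φm : Measure ℝ}

lemma muR_Iio (hφtail : ∀ x : ℝ, 0 < x → φm (Set.Iio (-x)) = ENNReal.ofReal (x ^ (-α) * θ (Real.log x)))
    {t : ℝ} (ht : t < 0) :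
    (φm.restrict (Iio 0)) (Iio t) = ENNReal.ofReal ((-t) ^ (-α) * θ (Real.log (-t))) := by
  rw [Measure.restrict_apply measurableSet_Iio]
  have h1 : Iio t ∩ Iio 0 = Iio t := inter_eq_left.2 (Iio_subset_Iio ht.le)
  rw [h1]
  have := hφtail (-t) (by linarith)
  rwa [neg_neg] at this

lemma muR_Ici : (φm.restrict (Iio 0)) (Ici 0) = 0 := by
  rw [Measure.restrict_apply measurableSet_Ici]
  have : Ici (0:ℝ) ∩ Iio 0 = ∅ := by
    ext x; simp only [mem_inter_iff, mem_Ici, mem_Iio, mem_empty_iff_false, iff_false, not_and,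
      not_lt]
    exact fun h => h
  rw [this, measure_empty]

/-- Scaling property of the restricted Lévy measure. -/
lemma map_muR (hα1 : 1 < α) (hc : 1 < c) (hθper : Function.Periodic θ (Real.log (c ^ (1 / α))))
    (hφtail : ∀ x : ℝ, 0 < x → φm (Set.Iio (-x)) = ENNReal.ofReal (x ^ (-α) * θ (Real.log x))) :
    Measure.map (fun x : ℝ => c ^ (1 / α) * x) (φm.restrict (Iio 0))
      = ENNReal.ofReal c • φm.restrict (Iio 0) := by
  have hc0 : (0:ℝ) < c := by linarith
  have hα0 : α ≠ 0 := by linarith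
  set r : ℝ := c ^ (1 / α) with hrdef
  have hr0 : 0 < r := Real.rpow_pos_of_pos hc0 _
  have hrα : r ^ α = c := by
    rw [hrdef, ← Real.rpow_mul hc0.le, one_div_mul_cancel hα0, Real.rpow_one]
  have hmeas : Measurable fun x : ℝ => r * x := measurable_id.const_mul r
  have hpre : ∀ t : ℝ, (fun x : ℝ => r * x) ⁻¹' Iio t = Iio (t / r) := by
    intro t; ext x
    simp only [mem_preimage, mem_Iio]
    rw [lt_div_iff₀ hr0, mul_comm]
  have hval : ∀ t : ℝ, t < 0 → (Measure.map (fun x : ℝ => r * x) (φm.restrict (Iio 0))) (Iio t)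
      = ENNReal.ofReal (c * ((-t) ^ (-α) * θ (Real.log (-t)))) := by
    intro t ht
    rw [Measure.map_apply hmeas measurableSet_Iio, hpre,
      muR_Iio hφtail (div_neg_of_neg_of_pos ht hr0)]
    have hy : -(t/r) = (-t)/r := by ring
    rw [hy]
    have hmt : (0:ℝ) < -t := by linarith
    have h2 : ((-t)/r) ^ (-α) = (-t) ^ (-α) * c := by
      rw [Real.div_rpow hmt.le hr0.le, Real.rpow_neg hr0.le, hrα, div_inv_eq_mul]
    have h3 : Real.log ((-t)/r) = Real.log (-t) - Real.log (c ^ (1/α)) := by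
      rw [Real.log_div hmt.ne' hr0.ne']
    rw [h2, h3, hθper.sub_eq (Real.log (-t))]
    congr 1
    ring
  refine measure_ext_neg _ _ ?_ ?_ ?_ ?_
  · rw [Measure.map_apply hmeas measurableSet_Ici]
    have hpre2 : (fun x : ℝ => r * x) ⁻¹' Ici 0 = Ici 0 := by
      ext x
      simp only [mem_preimage, mem_Ici]
      exact mul_nonneg_iff_of_pos_left hr0
    rw [hpre2, muR_Ici]
  · rw [Measure.smul_apply, muR_Ici, smul_eq_mul, mul_zero]
  · intro t ht; rw [hval t ht]; exact ENNReal.ofReal_ne_top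
  · intro t ht
    rw [hval t ht, Measure.smul_apply, muR_Iio hφtail ht, smul_eq_mul,
      ← ENNReal.ofReal_mul hc0.le]

end Scaling

lemma psiSemi_real (φm : Measure ℝ) (k : ℝ) :
    psiSemi φm (-(Complex.I * (k:ℂ))) = ((∫ x, fS k x ∂(φm.restrict (Iio 0)) : ℝ) : ℂ) := by
  have hcongr : ∫ x in Iio (0:ℝ),
      (Complex.exp (Complex.I * -(Complex.I * (k:ℂ)) * (x:ℂ)) - 1
        - Complex.I * -(Complex.I * (k:ℂ)) * (x:ℂ)) ∂φm
      = ∫ x in Iio (0:ℝ), ((fS k x : ℝ) : ℂ) ∂φm := by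
    refine integral_congr_ae (Eventually.of_forall fun x => ?_)
    have h1 : Complex.I * -(Complex.I * (k:ℂ)) * (x:ℂ) = ((k * x : ℝ) : ℂ) := by
      push_cast
      have h2 : Complex.I * -(Complex.I * (k:ℂ)) = (k:ℂ) := by
        rw [mul_neg, ← mul_assoc, Complex.I_mul_I]; ring
      rw [h2]
    dsimp only
    rw [h1, ← Complex.ofReal_exp]
    simp only [fS]
    push_cast
    ring
  rw [psiSemi, hcongr]
  exact integral_ofReal

lemma hasDerivAt_fS (t x : ℝ) :
    HasDerivAt (fun u => fS u x) (Real.exp (t * x) * x - x) t := by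
  have h1 : HasDerivAt (fun u : ℝ => u * x) x t := hasDerivAt_mul_const x
  have h2 : HasDerivAt (fun u : ℝ => Real.exp (u * x)) (Real.exp (t * x) * x) t :=
    h1.exp
  exact (h2.sub_const 1).sub h1

lemma deriv_nonneg_fS {t x : ℝ} (ht : 0 ≤ t) (hx : x ≤ 0) :
    0 ≤ Real.exp (t * x) * x - x := by
  have h1 : Real.exp (t * x) ≤ 1 :=
    Real.exp_le_one_iff.2 (mul_nonpos_of_nonneg_of_nonpos ht hx)
  nlinarith [mul_nonneg (neg_nonneg.2 hx) (sub_nonneg.2 h1)]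

lemma deriv_bound_ball {t T x : ℝ} (ht0 : 0 ≤ t) (htT : t ≤ T) (hT : 0 < T) (hx : x ≤ 0) :
    ‖Real.exp (t * x) * x - x‖ ≤ 3 / T * fS T x := by
  rw [Real.norm_eq_abs, abs_of_nonneg (deriv_nonneg_fS ht0 hx)]
  have h1 : Real.exp (t * x) * x - x ≤ Real.exp (T * x) * x - x := by
    have h2 : Real.exp (T * x) ≤ Real.exp (t * x) :=
      Real.exp_le_exp.2 (mul_le_mul_of_nonpos_right htT hx)
    nlinarith [mul_le_mul_of_nonpos_right h2 hx]
  calc Real.exp (t * x) * x - x ≤ Real.exp (T * x) * x - x := h1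
    _ ≤ |Real.exp (T * x) * x - x| := le_abs_self _
    _ ≤ 3 / T * fS T x := fS_deriv_bound hT hx

noncomputable def GG (φm : Measure ℝ) (k : ℝ) : ℝ := ∫ x, fS k x ∂(φm.restrict (Iio 0))

noncomputable def DD (φm : Measure ℝ) (k : ℝ) : ℝ :=
  ∫ x, (Real.exp (k * x) * x - x) ∂(φm.restrict (Iio 0))

/-- Lemma 4.2: the inverse `ξ` of `k ↦ ψ(-ik)` is continuously
differentiable and strictly increasing on `(0,∞)`, satisfies the scaling relation
`ξ(cs) = c^{1/α} ξ(s)`, the function `g(x) = e^{-x/α} ξ(e^x)` is `log c`-periodic,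
and `ξ(s) = s^{1/α} g(log s)`. -/
theorem xi_scaling_and_periodicity
    (α c : ℝ) (hα : 1 < α ∧ α < 2) (hc : 1 < c)
    (θ : ℝ → ℝ) (hθc : Continuous θ) (hθpos : ∀ y : ℝ, 0 < θ y)
    (hθper : Function.Periodic θ (Real.log (c ^ (1 / α))))
    (hθmono : AntitoneOn (fun x : ℝ => x ^ (-α) * θ (Real.log x)) (Set.Ioi 0))
    (φm : MeasureTheory.Measure ℝ)
    (hφtail : ∀ x : ℝ, 0 < x → φm (Set.Iio (-x)) = ENNReal.ofReal (x ^ (-α) * θ (Real.log x)))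
    (hφsupp : φm (Set.Ici 0) = 0)
    (ξ : ℝ → ℝ)
    (hξ : ∀ s : ℝ, 0 < s → 0 < ξ s ∧ psiSemi φm (-(Complex.I * (ξ s : ℂ))) = (s : ℂ)) :
    ContDiffOn ℝ 1 ξ (Set.Ioi 0) ∧
    StrictMonoOn ξ (Set.Ioi 0) ∧
    (∀ s : ℝ, 0 < s → ξ (c * s) = c ^ (1 / α) * ξ s) ∧
    Function.Periodic (gFun α ξ) (Real.log c) ∧
    (∀ s : ℝ, 0 < s → ξ s = s ^ (1 / α) * gFun α ξ (Real.log s)) := by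
  obtain ⟨hα1, hα2⟩ := hα
  have hc0 : (0:ℝ) < c := by linarith
  have hα0 : α ≠ 0 := by linarith
  have hr0 : (0:ℝ) < c ^ (1/α) := Real.rpow_pos_of_pos hc0 _
  have hr1 : (1:ℝ) < c ^ (1/α) :=
    (Real.one_lt_rpow_iff_of_pos hc0).2 (Or.inl ⟨hc, by positivity⟩)
  have hξpos : ∀ s : ℝ, 0 < s → 0 < ξ s := fun s hs => (hξ s hs).1
  have haeneg : ∀ᵐ x ∂(φm.restrict (Iio 0)), x < 0 := by
    filter_upwards [ae_restrict_mem measurableSet_Iio] with x hx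
    exact hx
  have hμpos : (0:ENNReal) < (φm.restrict (Iio 0)) (Iio (-1)) := by
    rw [muR_Iio hφtail (by norm_num : (-1:ℝ) < 0)]
    have h1 : (-(-1:ℝ)) ^ (-α) * θ (Real.log (-(-1:ℝ))) = θ 0 := by
      norm_num [Real.one_rpow, Real.log_one]
    rw [h1]
    exact ENNReal.ofReal_pos.2 (hθpos 0)
  -- value of G at ξ s, and integrability there
  have hGxi : ∀ s : ℝ, 0 < s → GG φm (ξ s) = s := by
    intro s hs
    have h2 := (hξ s hs).2
    rw [psiSemi_real] at h2
    exact_mod_cast h2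
  have hIntxi : ∀ s : ℝ, 0 < s → Integrable (fS (ξ s)) (φm.restrict (Iio 0)) := by
    intro s hs
    by_contra hni
    have h0 : GG φm (ξ s) = 0 := integral_undef hni
    rw [hGxi s hs] at h0; linarith
  -- scaling of G
  have hmap := map_muR hα1 hc hθper hφtail
  have hscaleG : ∀ k : ℝ, GG φm (c ^ (1/α) * k) = c * GG φm k := by
    intro k
    have hAE : AEMeasurable (fun x : ℝ => c ^ (1/α) * x) (φm.restrict (Iio 0)) :=
      (measurable_id.const_mul _).aemeasurable
    have h1 : ∫ x, fS k x ∂(Measure.map (fun x : ℝ => c ^ (1/α) * x) (φm.restrict (Iio 0)))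
        = ∫ x, fS k (c ^ (1/α) * x) ∂(φm.restrict (Iio 0)) :=
      integral_map hAE (fS_cont k).aestronglyMeasurable
    rw [hmap, integral_smul_measure] at h1
    have h2 : ∀ x : ℝ, fS k (c ^ (1/α) * x) = fS (c ^ (1/α) * k) x := by
      intro x; simp only [fS]; ring_nf
    simp only [h2] at h1
    have h3 : (ENNReal.ofReal c).toReal = c := ENNReal.toReal_ofReal hc0.le
    simp only [GG]
    rw [← h1, h3, smul_eq_mul]
  have hemb : MeasurableEmbedding (fun x : ℝ => c ^ (1/α) * x) :=
    (Homeomorph.mulLeft₀ (c ^ (1/α)) hr0.ne').measurableEmbedding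
  have hscaleInt : ∀ k : ℝ, Integrable (fS (c ^ (1/α) * k)) (φm.restrict (Iio 0))
      ↔ Integrable (fS k) (φm.restrict (Iio 0)) := by
    intro k
    have key2 := hemb.integrable_map_iff (g := fS k) (μ := φm.restrict (Iio 0))
    rw [hmap] at key2
    have hcomp : fS k ∘ (fun x : ℝ => c ^ (1/α) * x) = fS (c ^ (1/α) * k) := by
      funext x; simp only [Function.comp_apply, fS]; ring_nf
    rw [hcomp] at key2
    have ismul : Integrable (fS k) (ENNReal.ofReal c • (φm.restrict (Iio 0)))
        ↔ Integrable (fS k) (φm.restrict (Iio 0)) :=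
      integrable_smul_measure (ENNReal.ofReal_pos.2 hc0).ne' ENNReal.ofReal_ne_top
    exact key2.symm.trans ismul
  -- strict monotonicity of G among integrable points
  have hGlt : ∀ k₁ k₂ : ℝ, 0 < k₁ → k₁ < k₂ →
      Integrable (fS k₁) (φm.restrict (Iio 0)) → Integrable (fS k₂) (φm.restrict (Iio 0)) →
      GG φm k₁ < GG φm k₂ := by
    intro k₁ k₂ h1 hlt hI1 hI2
    have hae0 : 0 ≤ᵐ[φm.restrict (Iio 0)] fun x => fS k₂ x - fS k₁ x := by
      filter_upwards [haeneg] with x hx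
      exact sub_nonneg.2 (fS_mono hx.le h1.le hlt.le)
    have hdiff : 0 < ∫ x, (fS k₂ x - fS k₁ x) ∂(φm.restrict (Iio 0)) := by
      rw [integral_pos_iff_support_of_nonneg_ae hae0 (hI2.sub hI1)]
      refine lt_of_lt_of_le hμpos (measure_mono ?_)
      intro x hx
      exact Function.mem_support.2
        (sub_pos.2 (fS_strict_mono (lt_trans (mem_Iio.1 hx) (by norm_num)) h1 hlt)).ne'
    have hsub : ∫ x, (fS k₂ x - fS k₁ x) ∂(φm.restrict (Iio 0))
        = (∫ x, fS k₂ x ∂(φm.restrict (Iio 0))) - ∫ x, fS k₁ x ∂(φm.restrict (Iio 0)) :=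
      integral_sub hI2 hI1
    simp only [GG]
    linarith [hdiff, hsub]
  have hGinj : ∀ k₁ k₂ : ℝ, 0 < k₁ → 0 < k₂ → Integrable (fS k₁) (φm.restrict (Iio 0)) →
      Integrable (fS k₂) (φm.restrict (Iio 0)) → GG φm k₁ = GG φm k₂ → k₁ = k₂ := by
    intro k₁ k₂ h1 h2 hI1 hI2 heq
    rcases lt_trichotomy k₁ k₂ with hlt | heq' | hlt
    · exact absurd heq (ne_of_lt (hGlt _ _ h1 hlt hI1 hI2))
    · exact heq'
    · exact absurd heq.symm (ne_of_lt (hGlt _ _ h2 hlt hI2 hI1))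
  -- scaling of ξ
  have hscaling : ∀ s : ℝ, 0 < s → ξ (c * s) = c ^ (1/α) * ξ s := by
    intro s hs
    have hcs : 0 < c * s := mul_pos hc0 hs
    have h1 : GG φm (ξ (c*s)) = c * s := hGxi _ hcs
    have h2 : GG φm (c ^ (1/α) * ξ s) = c * s := by rw [hscaleG (ξ s), hGxi s hs]
    exact hGinj _ _ (hξpos _ hcs) (mul_pos hr0 (hξpos s hs)) (hIntxi _ hcs)
      ((hscaleInt (ξ s)).2 (hIntxi s hs)) (h1.trans h2.symm)
  -- ξ at powers of c
  have hxin : ∀ n : ℕ, ξ (c ^ n) = (c ^ (1/α)) ^ n * ξ 1 := by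
    intro n
    induction n with
    | zero => simp
    | succ n ih =>
      have hcn : (0:ℝ) < c ^ n := pow_pos hc0 n
      rw [show c ^ (n+1) = c * c ^ n from by ring, hscaling (c ^ n) hcn, ih]
      ring
  -- integrability for all k > 0
  have hIntAll : ∀ k : ℝ, 0 < k → Integrable (fS k) (φm.restrict (Iio 0)) := by
    intro k hk
    obtain ⟨n, hn⟩ := pow_unbounded_of_one_lt (k / ξ 1) hr1
    have hξ1 : 0 < ξ 1 := hξpos 1 one_pos
    have hkK : k ≤ (c ^ (1/α)) ^ n * ξ 1 := by
      rw [div_lt_iff₀ hξ1] at hn; linarith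
    have hK : Integrable (fS (ξ (c ^ n))) (φm.restrict (Iio 0)) :=
      hIntxi _ (pow_pos hc0 n)
    rw [hxin n] at hK
    refine hK.mono (fS_cont k).aestronglyMeasurable ?_
    filter_upwards [haeneg] with x hx
    rw [Real.norm_eq_abs, Real.norm_eq_abs, abs_of_nonneg (fS_nonneg _ _),
      abs_of_nonneg (fS_nonneg _ _)]
    exact fS_mono hx.le hk.le hkK
  -- strict monotonicity of ξ
  have hξmono : StrictMonoOn ξ (Ioi 0) := by
    intro s₁ hs₁ s₂ hs₂ hlt
    have hs₁' : (0:ℝ) < s₁ := mem_Ioi.1 hs₁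
    have hs₂' : (0:ℝ) < s₂ := mem_Ioi.1 hs₂
    by_contra hle
    push_neg at hle
    have hGle : GG φm (ξ s₂) ≤ GG φm (ξ s₁) := by
      rcases eq_or_lt_of_le hle with heq | hltt
      · rw [heq]
      · exact (hGlt _ _ (hξpos s₂ hs₂') hltt (hIntxi s₂ hs₂') (hIntxi s₁ hs₁')).le
    rw [hGxi s₁ hs₁', hGxi s₂ hs₂'] at hGle
    exact absurd hlt (not_lt.2 hGle)
  -- positivity of G
  have hGpos : ∀ k : ℝ, 0 < k → 0 < GG φm k := by
    intro k hk
    have hae0 : 0 ≤ᵐ[φm.restrict (Iio 0)] fS k := Eventually.of_forall (fS_nonneg k)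
    simp only [GG]
    rw [integral_pos_iff_support_of_nonneg_ae hae0 (hIntAll k hk)]
    refine lt_of_lt_of_le hμpos (measure_mono ?_)
    intro x hx
    exact Function.mem_support.2 (fS_pos hk (lt_trans (mem_Iio.1 hx) (by norm_num))).ne'
  -- ξ is onto (0, ∞)
  have hξsurj : ∀ k : ℝ, 0 < k → ξ (GG φm k) = k := by
    intro k hk
    have h1 : GG φm (ξ (GG φm k)) = GG φm k := hGxi _ (hGpos k hk)
    exact hGinj _ _ (hξpos _ (hGpos k hk)) hk (hIntxi _ (hGpos k hk)) (hIntAll k hk) h1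
  have himg : ξ '' (Ioi 0) = Ioi 0 := by
    apply subset_antisymm
    · rintro y ⟨s, hs, rfl⟩
      exact mem_Ioi.2 (hξpos s (mem_Ioi.1 hs))
    · intro k hk
      exact ⟨GG φm k, mem_Ioi.2 (hGpos k (mem_Ioi.1 hk)), hξsurj k (mem_Ioi.1 hk)⟩
  have hξcont : ∀ s : ℝ, 0 < s → ContinuousAt ξ s := by
    intro s hs
    refine hξmono.continuousAt_of_image_mem_nhds (isOpen_Ioi.mem_nhds hs) ?_
    rw [himg]
    exact isOpen_Ioi.mem_nhds (hξpos s hs)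
  -- derivative of G
  have hDerG : ∀ k : ℝ, 0 < k →
      Integrable (fun x => Real.exp (k*x) * x - x) (φm.restrict (Iio 0)) ∧
      HasDerivAt (GG φm) (DD φm k) k := by
    intro k hk
    have hT : (0:ℝ) < k + k/2 := by linarith
    have hball : ∀ t ∈ Metric.ball k (k/2), 0 ≤ t ∧ t ≤ k + k/2 := by
      intro t ht
      rw [Metric.mem_ball, Real.dist_eq, abs_lt] at ht
      constructor <;> linarith [ht.1, ht.2]
    have main := hasDerivAt_integral_of_dominated_loc_of_deriv_le (μ := φm.restrict (Iio 0))
      (F := fS) (F' := fun t x => Real.exp (t*x) * x - x) (x₀ := k)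
      (bound := fun x => 3 / (k + k/2) * fS (k + k/2) x)
      (Metric.ball_mem_nhds k (half_pos hk))
      (Eventually.of_forall fun t => (fS_cont t).aestronglyMeasurable)
      (hIntAll k hk)
      ((Continuous.aestronglyMeasurable (by fun_prop)))
      ?_ ((hIntAll (k + k/2) hT).const_mul _)
      (Eventually.of_forall fun x t _ => hasDerivAt_fS t x)
    · exact main
    · filter_upwards [haeneg] with x hx
      intro t ht
      exact deriv_bound_ball (hball t ht).1 (hball t ht).2 hT hx.le
  -- positivity of D
  have hDpos : ∀ k : ℝ, 0 < k → 0 < DD φm k := by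
    intro k hk
    have hInt := (hDerG k hk).1
    have hae0 : 0 ≤ᵐ[φm.restrict (Iio 0)] fun x => Real.exp (k*x) * x - x := by
      filter_upwards [haeneg] with x hx
      exact deriv_nonneg_fS hk.le hx.le
    simp only [DD]
    rw [integral_pos_iff_support_of_nonneg_ae hae0 hInt]
    refine lt_of_lt_of_le hμpos (measure_mono ?_)
    intro x hx
    have hx0 : x < 0 := lt_trans (mem_Iio.1 hx) (by norm_num)
    have h1 : Real.exp (k*x) < 1 := Real.exp_lt_one_iff.2 (mul_neg_of_pos_of_neg hk hx0)
    have h2 : 0 < Real.exp (k*x) * x - x := by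
      nlinarith [mul_pos_of_neg_of_neg hx0 (by linarith : Real.exp (k*x) - 1 < 0)]
    exact Function.mem_support.2 h2.ne'
  -- continuity of D
  have hDcont : ∀ k : ℝ, 0 < k → ContinuousAt (DD φm) k := by
    intro k hk
    have hT : (0:ℝ) < k + k/2 := by linarith
    have hball : ∀ t ∈ Metric.ball k (k/2), 0 ≤ t ∧ t ≤ k + k/2 := by
      intro t ht
      rw [Metric.mem_ball, Real.dist_eq, abs_lt] at ht
      constructor <;> linarith [ht.1, ht.2]
    refine continuousAt_of_dominated
      (F := fun t x => Real.exp (t*x) * x - x)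
      (bound := fun x => 3 / (k + k/2) * fS (k + k/2) x)
      (Eventually.of_forall fun t => Continuous.aestronglyMeasurable (by fun_prop)) ?_
      ((hIntAll (k + k/2) hT).const_mul _)
      (Eventually.of_forall fun x =>
        (by fun_prop : Continuous fun t : ℝ => Real.exp (t*x) * x - x).continuousAt)
    filter_upwards [Metric.ball_mem_nhds k (half_pos hk)] with t ht
    filter_upwards [haeneg] with x hx
    exact deriv_bound_ball (hball t ht).1 (hball t ht).2 hT hx.le
  -- derivative of ξ
  have hξder : ∀ s : ℝ, 0 < s → HasDerivAt ξ (DD φm (ξ s))⁻¹ s := by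
    intro s hs
    refine HasDerivAt.of_local_left_inverse (hξcont s hs)
      ((hDerG (ξ s) (hξpos s hs)).2) (hDpos _ (hξpos s hs)).ne' ?_
    filter_upwards [isOpen_Ioi.mem_nhds hs] with y hy
    exact hGxi y (mem_Ioi.1 hy)
  -- continuous differentiability of ξ
  have hCD : ContDiffOn ℝ 1 ξ (Ioi 0) := by
    rw [show (1 : WithTop ℕ∞) = 0 + 1 from (zero_add 1).symm,
      contDiffOn_succ_iff_deriv_of_isOpen isOpen_Ioi]
    refine ⟨fun s hs => (hξder s (mem_Ioi.1 hs)).differentiableAt.differentiableWithinAt,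
      ?_, ?_⟩
    · intro h; simp at h
    · rw [contDiffOn_zero]
      have heq : EqOn (deriv ξ) (fun s => (DD φm (ξ s))⁻¹) (Ioi 0) :=
        fun s hs => (hξder s (mem_Ioi.1 hs)).deriv
      refine ContinuousOn.congr ?_ heq
      refine ContinuousOn.inv₀ ?_ (fun s hs => (hDpos _ (hξpos s (mem_Ioi.1 hs))).ne')
      intro s hs
      exact ((hDcont (ξ s) (hξpos s (mem_Ioi.1 hs))).comp
        (hξcont s (mem_Ioi.1 hs))).continuousWithinAt
  -- periodicity
  have hper : Function.Periodic (gFun α ξ) (Real.log c) := by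
    intro x
    simp only [gFun]
    rw [Real.exp_add, Real.exp_log hc0, mul_comm (Real.exp x) c,
      hscaling (Real.exp x) (Real.exp_pos x)]
    have h1 : Real.exp (-(x + Real.log c) / α)
        = Real.exp (-x/α) * Real.exp (-(Real.log c)/α) := by
      rw [← Real.exp_add]; congr 1; ring
    rw [h1]
    have h2 : Real.exp (-(Real.log c)/α) * c ^ (1/α) = 1 := by
      rw [Real.rpow_def_of_pos hc0, ← Real.exp_add,
        show -(Real.log c)/α + Real.log c * (1/α) = 0 from by ring, Real.exp_zero]
    linear_combination Real.exp (-x/α) * ξ (Real.exp x) * h2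
  -- representation
  have hlast : ∀ s : ℝ, 0 < s → ξ s = s ^ (1/α) * gFun α ξ (Real.log s) := by
    intro s hs
    simp only [gFun]
    rw [Real.exp_log hs, Real.rpow_def_of_pos hs, ← mul_assoc, ← Real.exp_add,
      show Real.log s * (1/α) + -(Real.log s)/α = 0 from by ring, Real.exp_zero, one_mul]
  exact ⟨hCD, hξmono, hscaling, hper, hlast⟩
end

section
/- Let α ∈ (1,2), c > 1, θ admissible, φ the measure on (−∞,0) with φ((−∞,−x)) = x^{−α}θ(log x), ψ(z) = ∫_{(−∞,0)} (e^{izx} − 1 − izx) dφ(x), ξ(s) the unique positive real with ψ(−i·ξ(s)) = s, m(y) = e^{−αy}·ψ(−i·e^y), and f(s) = (1/α)·ξ(s)^α·m'(log ξ(s)). Then the function γ(x) := e^{−x/α}·(−f(e^x)/(e^x + f(e^x)))·ξ(e^x) is continuous and log(c)-periodic, i.e. γ(x + log c) = γ(x) for all x ∈ ℝ; equivalently, (−f(s)/(s + f(s)))·ξ(s) = s^{1/α}·γ(log s) for all s > 0. -/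
open MeasureTheory Set Filter

/-- The log-periodic symbol factor `m(y) = e^{-αy} ψ(-i e^y)` (real-valued). -/
noncomputable def mFun (φm : MeasureTheory.Measure ℝ) (α : ℝ) (y : ℝ) : ℝ :=
  Real.exp (-(α * y)) * (psiSemi φm (-(Complex.I * (Real.exp y : ℂ)))).re

/-- The function `γ(x) = e^{-x/α} (−f(e^x)/(e^x + f(e^x))) ξ(e^x)`. -/
noncomputable def gammaFun (α : ℝ) (f ξ : ℝ → ℝ) (x : ℝ) : ℝ :=
  Real.exp (-x / α) * (-(f (Real.exp x)) / (Real.exp x + f (Real.exp x))) * ξ (Real.exp x)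

open scoped ENNReal

namespace GammaAux

noncomputable def Hfun (u : ℝ) : ℝ := Real.exp u - 1 - u


lemma Hfun_nonneg (u : ℝ) : 0 ≤ Hfun u := by
  have := Real.add_one_le_exp u
  simp only [Hfun]; linarith

lemma Hfun_hasDerivAt (u : ℝ) : HasDerivAt Hfun (Real.exp u - 1) u := by
  exact ((Real.hasDerivAt_exp u).sub_const 1).sub (hasDerivAt_id u)

lemma Hfun_continuous : Continuous Hfun := by
  unfold Hfun; continuity

lemma strictAntiOn_Hfun : StrictAntiOn Hfun (Iic 0) := by
  apply strictAntiOn_of_deriv_neg (convex_Iic 0) Hfun_continuous.continuousOn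
  intro x hx
  rw [interior_Iic] at hx
  rw [(Hfun_hasDerivAt x).deriv]
  have : Real.exp x < 1 := Real.exp_lt_one_iff.mpr hx
  linarith

lemma Hfun_zero : Hfun 0 = 0 := by simp [Hfun]

lemma Hfun_pos {u : ℝ} (hu : u < 0) : 0 < Hfun u := by
  have := strictAntiOn_Hfun (le_of_lt hu) (le_refl (0:ℝ)) hu
  rwa [Hfun_zero] at this

lemma Hfun_cubic {u : ℝ} (hu : u ≤ 0) : u^2/2 + u^3/6 ≤ Hfun u := by
  -- p(u) = e^u - 1 - u - u^2/2 ≤ 0 on u ≤ 0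
  set p : ℝ → ℝ := fun u => Real.exp u - 1 - u - u^2/2 with hp
  have hpderiv : ∀ x : ℝ, HasDerivAt p (Hfun x) x := by
    intro x
    have : HasDerivAt p ((Real.exp x - 1) - (2*x^1)/2) x :=
      (((Real.hasDerivAt_exp x).sub_const 1).sub (hasDerivAt_id x)).sub
        ((hasDerivAt_pow 2 x).div_const 2)
    convert this using 1
    simp only [Hfun]; ring
  have hpmono : MonotoneOn p (Iic 0) := by
    apply monotoneOn_of_deriv_nonneg (convex_Iic 0)
    · exact (Continuous.continuousOn (by unfold p; continuity))
    · intro x hx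
      exact ((hpderiv x).differentiableAt).differentiableWithinAt
    · intro x hx
      rw [(hpderiv x).deriv]
      exact Hfun_nonneg x
  have hple : ∀ x ≤ (0:ℝ), p x ≤ 0 := by
    intro x hx
    have := hpmono (mem_Iic.mpr hx) (mem_Iic.mpr le_rfl) hx
    simpa [hp] using this
  -- q(u) = Hfun u - u^2/2 - u^3/6, q' = p ≤ 0 on Iic 0, q(0) = 0
  set q : ℝ → ℝ := fun u => Real.exp u - 1 - u - u^2/2 - u^3/6 with hq
  have hqderiv : ∀ x : ℝ, HasDerivAt q (p x) x := by
    intro x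
    have : HasDerivAt q ((Real.exp x - 1) - (2*x^1)/2 - (3*x^2)/6) x :=
      ((((Real.hasDerivAt_exp x).sub_const 1).sub (hasDerivAt_id x)).sub
        ((hasDerivAt_pow 2 x).div_const 2)).sub ((hasDerivAt_pow 3 x).div_const 6)
    convert this using 1
    simp [hp]; ring
  have hqanti : AntitoneOn q (Iic 0) := by
    apply antitoneOn_of_deriv_nonpos (convex_Iic 0)
    · exact (Continuous.continuousOn (by unfold q; continuity))
    · intro x hx
      exact ((hqderiv x).differentiableAt).differentiableWithinAt
    · intro x hx
      rw [(hqderiv x).deriv]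
      rw [interior_Iic] at hx
      exact hple x hx.le
  have := hqanti (mem_Iic.mpr hu) (mem_Iic.mpr le_rfl) hu
  simp only [hq] at this
  simp only [Hfun]
  norm_num at this ⊢
  linarith

lemma Hfun_quad {u : ℝ} (h1 : -1 ≤ u) (h2 : u ≤ 0) : u^2/3 ≤ Hfun u := by
  have h := Hfun_cubic h2
  have : u^3 ≥ -u^2 := by nlinarith
  nlinarith

lemma Hfun_lin {u : ℝ} (hu : u ≤ -1) : -u/6 ≤ Hfun u := by
  rcases le_or_gt u (-2) with h | h
  · have : Real.exp u ≥ 0 := (Real.exp_pos u).le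
    simp only [Hfun]; nlinarith
  · have h1 : Hfun (-1) ≤ Hfun u := by
      rcases eq_or_lt_of_le hu with h' | h'
      · rw [h']
      · exact (strictAntiOn_Hfun (by simp; linarith : u ∈ Iic (0:ℝ)) (by norm_num) h').le
        -- careful: strictAntiOn f a b : a ∈ s → b ∈ s → a < b → f b < f a
    have he : Hfun (-1) = Real.exp (-1) := by simp [Hfun]
    have h3 : (1:ℝ)/3 ≤ Real.exp (-1) := by
      rw [Real.exp_neg]
      have h9 : Real.exp 1 < 3 := lt_of_lt_of_le Real.exp_one_lt_d9 (by norm_num)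
      have hpos := Real.exp_pos 1
      have hinv : Real.exp 1 * (Real.exp 1)⁻¹ = 1 := mul_inv_cancel₀ (ne_of_gt hpos)
      nlinarith
    nlinarith [h1, he ▸ h1]


noncomputable def IFun (φm : Measure ℝ) (k : ℝ) : ℝ := ∫ x in Iio 0, Hfun (k*x) ∂φm

noncomputable def JFun (φm : Measure ℝ) (k : ℝ) : ℝ≥0∞ :=
  ∫⁻ x in Iio 0, ENNReal.ofReal (Hfun (k*x)) ∂φm

noncomputable def DFun (φm : Measure ℝ) (k : ℝ) : ℝ :=
  ∫ x in Iio 0, x * (Real.exp (k*x) - 1) ∂φm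

lemma psiSemi_eq (φm : Measure ℝ) (k : ℝ) :
    psiSemi φm (-(Complex.I * (k:ℂ))) = ((IFun φm k : ℝ) : ℂ) := by
  unfold psiSemi IFun
  have key : ∀ x : ℝ,
      Complex.exp (Complex.I * (-(Complex.I * (k:ℂ))) * (x:ℂ)) - 1
        - Complex.I * (-(Complex.I * (k:ℂ))) * (x:ℂ) = ((Hfun (k*x) : ℝ) : ℂ) := by
    intro x
    have h : Complex.I * (-(Complex.I * (k:ℂ))) * (x:ℂ) = ((k*x:ℝ):ℂ) := by
      push_cast
      rw [show Complex.I * -(Complex.I * (k:ℂ)) * (x:ℂ)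
            = -(Complex.I*Complex.I) * ((k:ℂ)*(x:ℂ)) by ring, Complex.I_mul_I]
      ring
    rw [h, ← Complex.ofReal_exp]
    push_cast [Hfun]
    ring
  calc ∫ x in Iio (0:ℝ), (Complex.exp (Complex.I * (-(Complex.I * (k:ℂ))) * (x:ℂ)) - 1
        - Complex.I * (-(Complex.I * (k:ℂ))) * (x:ℂ)) ∂φm
      = ∫ x in Iio (0:ℝ), ((Hfun (k*x) : ℝ) : ℂ) ∂φm :=
        integral_congr_ae (ae_of_all _ fun x => key x)
    _ = ((∫ x in Iio (0:ℝ), Hfun (k*x) ∂φm : ℝ) : ℂ) := integral_ofReal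

lemma tail_scale {α c : ℝ} (hα1 : 1 < α) (hc : 1 < c) {θ : ℝ → ℝ}
    (hθper : Function.Periodic θ (Real.log (c ^ (1 / α))))
    {φm : Measure ℝ}
    (hφtail : ∀ x : ℝ, 0 < x → φm (Set.Iio (-x)) = ENNReal.ofReal (x ^ (-α) * θ (Real.log x)))
    {a : ℝ} (ha : a < 0) :
    φm (Iio (a / c ^ (1/α))) = ENNReal.ofReal c * φm (Iio a) := by
  have hc0 : (0:ℝ) < c := lt_trans one_pos hc
  have hr0 : (0:ℝ) < c ^ (1/α) := Real.rpow_pos_of_pos hc0 _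
  have hx : (0:ℝ) < -a := by linarith
  have h0 := hφtail (-a / c^(1/α)) (by positivity)
  rw [show -(-a / c^(1/α)) = a / c^(1/α) by ring] at h0
  have h1 := hφtail (-a) hx
  rw [neg_neg] at h1
  rw [h0, h1, ← ENNReal.ofReal_mul hc0.le]
  congr 1
  have hlog : Real.log (-a / c^(1/α)) = Real.log (-a) - Real.log (c^(1/α)) :=
    Real.log_div hx.ne' hr0.ne'
  rw [hlog, hθper.sub_eq]
  have hrpow : (-a / c^(1/α)) ^ (-α) = (-a)^(-α) * c := by
    rw [Real.div_rpow hx.le hr0.le, Real.rpow_neg hr0.le, div_inv_eq_mul,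
      ← Real.rpow_mul hc0.le, one_div_mul_cancel (by linarith : α ≠ 0), Real.rpow_one]
  rw [hrpow]
  ring


lemma Hfun_anti : AntitoneOn Hfun (Iic 0) := strictAntiOn_Hfun.antitoneOn

lemma Hfun_comp_cont (k : ℝ) : Continuous (fun x : ℝ => Hfun (k*x)) :=
  Hfun_continuous.comp (continuous_const.mul continuous_id)

lemma exists_sol {k t : ℝ} (hk : 0 < k) (ht : 0 < t) : ∃ a, a < 0 ∧ Hfun (k*a) = t := by
  set g : ℝ → ℝ := fun x => Hfun (k*x) with hg
  have hab : -(t+2)/k ≤ 0 := by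
    apply div_nonpos_of_nonpos_of_nonneg <;> linarith
  have hga : t ≤ g (-(t+2)/k) := by
    have hkk : k * (-(t+2)/k) = -(t+2) := by field_simp
    simp only [hg, hkk, Hfun]
    have := (Real.exp_pos (-(t+2))).le
    linarith
  have hgb : g 0 ≤ t := by
    simp only [hg, mul_zero, Hfun_zero]
    exact ht.le
  obtain ⟨a, haIcc, hat⟩ :=
    intermediate_value_Icc' hab (Hfun_comp_cont k).continuousOn ⟨hgb, hga⟩
  refine ⟨a, ?_, hat⟩
  rcases lt_or_eq_of_le haIcc.2 with h | h
  · exact h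
  · exfalso
    rw [h] at hat
    simp only [hg, mul_zero, Hfun_zero] at hat
    linarith

lemma sublevel {k t a : ℝ} (hk : 0 < k) (ht : 0 < t) (ha : a < 0) (hat : Hfun (k*a) = t) :
    {x : ℝ | t < Hfun (k*x)} ∩ Iio 0 = Iio a := by
  ext x
  simp only [mem_inter_iff, mem_setOf_eq, mem_Iio]
  constructor
  · rintro ⟨hlt, hx0⟩
    by_contra hxa
    push_neg at hxa
    rcases eq_or_lt_of_le hxa with h | h
    · rw [← h, hat] at hlt; linarith
    · have := strictAntiOn_Hfun
        (mem_Iic.mpr (mul_nonpos_of_nonneg_of_nonpos hk.le ha.le))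
        (mem_Iic.mpr (mul_nonpos_of_nonneg_of_nonpos hk.le hx0.le))
        (mul_lt_mul_of_pos_left h hk)
      rw [hat] at this
      linarith
  · intro hxa
    have hx0 : x < 0 := lt_trans hxa ha
    refine ⟨?_, hx0⟩
    have := strictAntiOn_Hfun
      (mem_Iic.mpr (mul_nonpos_of_nonneg_of_nonpos hk.le hx0.le))
      (mem_Iic.mpr (mul_nonpos_of_nonneg_of_nonpos hk.le ha.le))
      (mul_lt_mul_of_pos_left hxa hk)
    rwa [hat] at this

lemma JFun_layer (φm : Measure ℝ) (k : ℝ) :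
    JFun φm k = ∫⁻ t in Ioi (0:ℝ), (φm.restrict (Iio 0)) {x | t < Hfun (k*x)} :=
  lintegral_eq_lintegral_meas_lt _ (ae_of_all _ fun x => Hfun_nonneg _)
    (Hfun_comp_cont k).aemeasurable

lemma JFun_scale {α c : ℝ} (hα1 : 1 < α) (hc : 1 < c) {θ : ℝ → ℝ}
    (hθper : Function.Periodic θ (Real.log (c ^ (1 / α))))
    {φm : Measure ℝ}
    (hφtail : ∀ x : ℝ, 0 < x → φm (Set.Iio (-x)) = ENNReal.ofReal (x ^ (-α) * θ (Real.log x)))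
    {k : ℝ} (hk : 0 < k) :
    JFun φm (c^(1/α) * k) = ENNReal.ofReal c * JFun φm k := by
  have hc0 : (0:ℝ) < c := lt_trans one_pos hc
  have hr0 : (0:ℝ) < c ^ (1/α) := Real.rpow_pos_of_pos hc0 _
  rw [JFun_layer, JFun_layer, ← lintegral_const_mul' _ _ ENNReal.ofReal_ne_top]
  apply setLIntegral_congr_fun measurableSet_Ioi
  intro t ht
  obtain ⟨a, ha, hat⟩ := exists_sol hk ht
  have hm1 : MeasurableSet {x : ℝ | t < Hfun ((c^(1/α)*k)*x)} :=
    measurableSet_lt measurable_const (Hfun_comp_cont _).measurable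
  have hm2 : MeasurableSet {x : ℝ | t < Hfun (k*x)} :=
    measurableSet_lt measurable_const (Hfun_comp_cont _).measurable
  have e1 : {x : ℝ | t < Hfun ((c^(1/α)*k)*x)} ∩ Iio 0 = Iio (a/(c^(1/α))) := by
    apply sublevel (by positivity) ht (div_neg_of_neg_of_pos ha hr0)
    rw [show (c^(1/α)*k)*(a/(c^(1/α))) = k*a by field_simp]
    exact hat
  have e2 : {x : ℝ | t < Hfun (k*x)} ∩ Iio 0 = Iio a := sublevel hk ht ha hat
  beta_reduce
  rw [Measure.restrict_apply hm1, Measure.restrict_apply hm2, e1, e2,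
    tail_scale hα1 hc hθper hφtail ha]

lemma IFun_eq_toReal (φm : Measure ℝ) (k : ℝ) : IFun φm k = (JFun φm k).toReal :=
  integral_eq_lintegral_of_nonneg_ae (ae_of_all _ fun x => Hfun_nonneg _)
    (Hfun_comp_cont k).aestronglyMeasurable

lemma IFun_scale {α c : ℝ} (hα1 : 1 < α) (hc : 1 < c) {θ : ℝ → ℝ}
    (hθper : Function.Periodic θ (Real.log (c ^ (1 / α))))
    {φm : Measure ℝ}
    (hφtail : ∀ x : ℝ, 0 < x → φm (Set.Iio (-x)) = ENNReal.ofReal (x ^ (-α) * θ (Real.log x)))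
    {k : ℝ} (hk : 0 < k) :
    IFun φm (c^(1/α) * k) = c * IFun φm k := by
  rw [IFun_eq_toReal, IFun_eq_toReal, JFun_scale hα1 hc hθper hφtail hk,
    ENNReal.toReal_mul, ENNReal.toReal_ofReal (le_of_lt (lt_trans one_pos hc))]

lemma JFun_mono (φm : Measure ℝ) {k1 k2 : ℝ} (h1 : 0 < k1) (h12 : k1 ≤ k2) :
    JFun φm k1 ≤ JFun φm k2 := by
  unfold JFun
  apply lintegral_mono_ae
  rw [ae_restrict_iff' measurableSet_Iio]
  apply ae_of_all
  intro x hx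
  apply ENNReal.ofReal_le_ofReal
  exact Hfun_anti
    (mem_Iic.mpr (mul_nonpos_of_nonneg_of_nonpos (le_trans h1.le h12) (le_of_lt hx)))
    (mem_Iic.mpr (mul_nonpos_of_nonneg_of_nonpos h1.le (le_of_lt hx)))
    (mul_le_mul_of_nonpos_right h12 (le_of_lt hx))


lemma integrable_Hfun {φm : Measure ℝ} {k : ℝ} (hfin : JFun φm k ≠ ⊤) :
    Integrable (fun x => Hfun (k*x)) (φm.restrict (Iio 0)) := by
  refine ⟨(Hfun_comp_cont k).aestronglyMeasurable, ?_⟩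
  rw [hasFiniteIntegral_iff_norm]
  have : ∀ x : ℝ, ENNReal.ofReal ‖Hfun (k*x)‖ = ENNReal.ofReal (Hfun (k*x)) := by
    intro x
    rw [Real.norm_eq_abs, abs_of_nonneg (Hfun_nonneg _)]
  simp_rw [this]
  exact lt_top_iff_ne_top.mpr hfin

lemma tail_pos {α : ℝ} {θ : ℝ → ℝ} (hθpos : ∀ y : ℝ, 0 < θ y)
    {φm : Measure ℝ}
    (hφtail : ∀ x : ℝ, 0 < x → φm (Set.Iio (-x)) = ENNReal.ofReal (x ^ (-α) * θ (Real.log x))) :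
    0 < φm (Iio (-1)) := by
  rw [hφtail 1 one_pos]
  apply ENNReal.ofReal_pos.mpr
  have h1 : (1:ℝ) ^ (-α) = 1 := Real.one_rpow _
  rw [h1, one_mul]
  exact hθpos _

/-- Strict monotonicity of the Bochner integral in `k`, given integrability. -/
lemma IFun_strict {φm : Measure ℝ} {α : ℝ} {θ : ℝ → ℝ} (hθpos : ∀ y : ℝ, 0 < θ y)
    (hφtail : ∀ x : ℝ, 0 < x → φm (Set.Iio (-x)) = ENNReal.ofReal (x ^ (-α) * θ (Real.log x)))
    {k1 k2 : ℝ} (h1 : 0 < k1) (h12 : k1 < k2)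
    (hi1 : Integrable (fun x => Hfun (k1*x)) (φm.restrict (Iio 0)))
    (hi2 : Integrable (fun x => Hfun (k2*x)) (φm.restrict (Iio 0))) :
    IFun φm k1 < IFun φm k2 := by
  have hdiffpos : ∀ x : ℝ, x < 0 → 0 < Hfun (k2*x) - Hfun (k1*x) := by
    intro x hx
    have := strictAntiOn_Hfun
      (mem_Iic.mpr (mul_nonpos_of_nonneg_of_nonpos (by linarith) hx.le))
      (mem_Iic.mpr (mul_nonpos_of_nonneg_of_nonpos h1.le hx.le))
      (by nlinarith : k2*x < k1*x)
    linarith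
  have hint : Integrable (fun x => Hfun (k2*x) - Hfun (k1*x)) (φm.restrict (Iio 0)) :=
    hi2.sub hi1
  have hnn : 0 ≤ᵐ[φm.restrict (Iio 0)] (fun x => Hfun (k2*x) - Hfun (k1*x)) :=
    (ae_restrict_iff' (p := fun x => (0:ℝ) ≤ Hfun (k2*x) - Hfun (k1*x))
      measurableSet_Iio).mpr (ae_of_all _ fun x hx => (hdiffpos x hx).le)
  have hpos : 0 < ∫ x in Iio (0:ℝ), (Hfun (k2*x) - Hfun (k1*x)) ∂φm := by
    rw [integral_pos_iff_support_of_nonneg_ae hnn hint]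
    have hsub : Iio (-1:ℝ) ⊆ Function.support (fun x => Hfun (k2*x) - Hfun (k1*x)) ∩ Iio 0 := by
      intro x hx
      have hx0 : x < 0 := lt_trans hx (by norm_num)
      exact ⟨fun h => (hdiffpos x hx0).ne' h, hx0⟩
    calc (0:ℝ≥0∞) < φm (Iio (-1)) := tail_pos hθpos hφtail
      _ ≤ φm (Function.support (fun x => Hfun (k2*x) - Hfun (k1*x)) ∩ Iio 0) :=
          measure_mono hsub
      _ = (φm.restrict (Iio 0)) (Function.support fun x => Hfun (k2*x) - Hfun (k1*x)) := by
          exact (Measure.restrict_apply (measurableSet_support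
            ((Hfun_comp_cont k2).sub (Hfun_comp_cont k1)).measurable)).symm
  have := integral_sub hi2 hi1
  unfold IFun
  rw [this] at hpos
  linarith

lemma IFun_pos {φm : Measure ℝ} {α : ℝ} {θ : ℝ → ℝ} (hθpos : ∀ y : ℝ, 0 < θ y)
    (hφtail : ∀ x : ℝ, 0 < x → φm (Set.Iio (-x)) = ENNReal.ofReal (x ^ (-α) * θ (Real.log x)))
    {k : ℝ} (hk : 0 < k)
    (hi : Integrable (fun x => Hfun (k*x)) (φm.restrict (Iio 0))) :
    0 < IFun φm k := by
  have hnn : 0 ≤ᵐ[φm.restrict (Iio 0)] (fun x => Hfun (k*x)) :=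
    ae_of_all _ fun x => Hfun_nonneg _
  unfold IFun
  rw [integral_pos_iff_support_of_nonneg_ae hnn hi]
  have hsub : Iio (-1:ℝ) ⊆ Function.support (fun x => Hfun (k*x)) ∩ Iio 0 := by
    intro x hx
    have hx0 : x < 0 := lt_trans hx (by norm_num)
    have : 0 < Hfun (k*x) := Hfun_pos (by nlinarith : k*x < 0)
    exact ⟨this.ne', hx0⟩
  calc (0:ℝ≥0∞) < φm (Iio (-1)) := tail_pos hθpos hφtail
    _ ≤ φm (Function.support (fun x => Hfun (k*x)) ∩ Iio 0) := measure_mono hsub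
    _ = (φm.restrict (Iio 0)) (Function.support fun x => Hfun (k*x)) :=
        (Measure.restrict_apply (measurableSet_support (Hfun_comp_cont k).measurable)).symm


lemma norm_deriv_bound {a b k x : ℝ} (ha : 0 < a) (hak : a ≤ k) (hkb : k ≤ b) (hx : x < 0) :
    ‖x * (Real.exp (k*x) - 1)‖ ≤ max (6/a) (3*b/a^2) * Hfun (a*x) := by
  have hkx : k*x < 0 := mul_neg_of_pos_of_neg (lt_of_lt_of_le ha hak) hx
  have he1 : Real.exp (k*x) ≤ 1 := Real.exp_le_one_iff.mpr hkx.le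
  have hepos := (Real.exp_pos (k*x)).le
  have habs : ‖x * (Real.exp (k*x) - 1)‖ = (-x) * (1 - Real.exp (k*x)) := by
    rw [Real.norm_eq_abs, abs_mul, abs_of_neg hx, abs_of_nonpos (by linarith)]
    ring
  have hb2 : 1 - Real.exp (k*x) ≤ -(k*x) := by
    have := Real.add_one_le_exp (k*x)
    linarith
  have hb0 : (0:ℝ) < b := lt_of_lt_of_le ha (le_trans hak hkb)
  have hHnn := Hfun_nonneg (a*x)
  rcases le_or_gt (-1/a) x with hcase | hcase
  · have h1 : -1 ≤ a*x := by
      have := mul_le_mul_of_nonneg_left hcase ha.le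
      have ha' : a * (-1/a) = -1 := by field_simp
      linarith
    have hq := Hfun_quad h1 (mul_nonpos_of_nonneg_of_nonpos ha.le hx.le)
    have step1 : (-x) * (1 - Real.exp (k*x)) ≤ k * x^2 := by
      nlinarith [mul_le_mul_of_nonneg_left hb2 (by linarith : (0:ℝ) ≤ -x)]
    have step2 : k * x^2 ≤ b * x^2 := by nlinarith [sq_nonneg x]
    have step3 : b * x^2 ≤ (3*b/a^2) * Hfun (a*x) := by
      have heq : (3*b/a^2) * ((a*x)^2/3) = b * x^2 := by
        field_simp
      have := mul_le_mul_of_nonneg_left hq (by positivity : (0:ℝ) ≤ 3*b/a^2)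
      linarith
    have step4 : (3*b/a^2) * Hfun (a*x) ≤ max (6/a) (3*b/a^2) * Hfun (a*x) :=
      mul_le_mul_of_nonneg_right (le_max_right _ _) hHnn
    rw [habs]
    linarith
  · have h1 : a*x ≤ -1 := by
      have := mul_le_mul_of_nonneg_left hcase.le ha.le
      have ha' : a * (-1/a) = -1 := by field_simp
      linarith
    have hl := Hfun_lin h1
    have step1 : (-x) * (1 - Real.exp (k*x)) ≤ -x := by
      nlinarith
    have step2 : -x ≤ (6/a) * Hfun (a*x) := by
      have heq : (6/a) * (-(a*x)/6) = -x := by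
        field_simp
      have := mul_le_mul_of_nonneg_left hl (by positivity : (0:ℝ) ≤ 6/a)
      linarith
    have step4 : (6/a) * Hfun (a*x) ≤ max (6/a) (3*b/a^2) * Hfun (a*x) :=
      mul_le_mul_of_nonneg_right (le_max_left _ _) hHnn
    rw [habs]
    linarith


lemma cont_deriv_integrand (k : ℝ) :
    Continuous (fun x : ℝ => x * (Real.exp (k*x) - 1)) := by
  continuity

lemma hasDerivAt_Hk (x k : ℝ) :
    HasDerivAt (fun k : ℝ => Hfun (k*x)) (x*(Real.exp (k*x)-1)) k := by
  have hkx : HasDerivAt (fun k : ℝ => k*x) x k := hasDerivAt_mul_const x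
  have : HasDerivAt (fun k : ℝ => Real.exp (k*x) - 1 - k*x) (Real.exp (k*x)*x - x) k :=
    ((hkx.exp).sub_const 1).sub hkx
  have heq : (fun k : ℝ => Hfun (k*x)) = fun k : ℝ => Real.exp (k*x) - 1 - k*x := by
    funext k'
    simp [Hfun]
  rw [heq]
  convert this using 1
  ring

lemma hasDerivAt_IFun {φm : Measure ℝ} {k0 : ℝ} (hk0 : 0 < k0)
    (hints : ∀ k : ℝ, 0 < k → Integrable (fun x => Hfun (k*x)) (φm.restrict (Iio 0))) :
    Integrable (fun x => x * (Real.exp (k0*x) - 1)) (φm.restrict (Iio 0)) ∧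
    HasDerivAt (IFun φm) (DFun φm k0) k0 := by
  set C : ℝ := max (6/(k0/2)) (3*(3*k0/2)/(k0/2)^2) with hC
  have hball : ∀ k ∈ Metric.ball k0 (k0/2), k0/2 ≤ k ∧ k ≤ 3*k0/2 := by
    intro k hk
    rw [Metric.mem_ball, Real.dist_eq] at hk
    rcases abs_lt.mp hk with ⟨h1, h2⟩
    constructor <;> linarith
  have hbound : ∀ᵐ x ∂(φm.restrict (Iio 0)), ∀ k ∈ Metric.ball k0 (k0/2),
      ‖x*(Real.exp (k*x)-1)‖ ≤ C * Hfun ((k0/2)*x) := by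
    filter_upwards [ae_restrict_mem measurableSet_Iio] with x hx k hk
    obtain ⟨h1, h2⟩ := hball k hk
    exact norm_deriv_bound (by linarith) h1 h2 hx
  have h := hasDerivAt_integral_of_dominated_loc_of_deriv_le (Metric.ball_mem_nhds k0 (half_pos hk0))
    (Eventually.of_forall fun k => (Hfun_comp_cont k).aestronglyMeasurable)
    (hints k0 hk0)
    ((cont_deriv_integrand k0).aestronglyMeasurable)
    hbound
    ((hints (k0/2) (half_pos hk0)).const_mul C)
    (ae_of_all _ fun x k _ => hasDerivAt_Hk x k)
  exact ⟨h.1, h.2⟩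

lemma contAt_DFun {φm : Measure ℝ} {k0 : ℝ} (hk0 : 0 < k0)
    (hints : ∀ k : ℝ, 0 < k → Integrable (fun x => Hfun (k*x)) (φm.restrict (Iio 0))) :
    ContinuousAt (DFun φm) k0 := by
  set C : ℝ := max (6/(k0/2)) (3*(3*k0/2)/(k0/2)^2) with hC
  apply continuousAt_of_dominated (bound := fun x => C * Hfun ((k0/2)*x))
  · exact Eventually.of_forall fun k => (cont_deriv_integrand k).aestronglyMeasurable
  · apply eventually_of_mem (Metric.ball_mem_nhds k0 (half_pos hk0))
    intro k hk
    filter_upwards [ae_restrict_mem measurableSet_Iio] with x hx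
    rw [Metric.mem_ball, Real.dist_eq] at hk
    rcases abs_lt.mp hk with ⟨h1, h2⟩
    exact norm_deriv_bound (by linarith) (by linarith) (by linarith : k ≤ 3*k0/2) hx
  · exact (hints (k0/2) (half_pos hk0)).const_mul C
  · apply ae_of_all
    intro x
    apply Continuous.continuousAt
    continuity

lemma DFun_pos {φm : Measure ℝ} {α : ℝ} {θ : ℝ → ℝ} (hθpos : ∀ y : ℝ, 0 < θ y)
    (hφtail : ∀ x : ℝ, 0 < x → φm (Set.Iio (-x)) = ENNReal.ofReal (x ^ (-α) * θ (Real.log x)))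
    {k : ℝ} (hk : 0 < k)
    (hi : Integrable (fun x => x * (Real.exp (k*x) - 1)) (φm.restrict (Iio 0))) :
    0 < DFun φm k := by
  have hpos : ∀ x : ℝ, x < 0 → 0 < x * (Real.exp (k*x) - 1) := by
    intro x hx
    have h1 : Real.exp (k*x) < 1 := Real.exp_lt_one_iff.mpr (mul_neg_of_pos_of_neg hk hx)
    nlinarith
  have hnn : 0 ≤ᵐ[φm.restrict (Iio 0)] (fun x => x * (Real.exp (k*x) - 1)) :=
    (ae_restrict_iff' (p := fun x => (0:ℝ) ≤ x * (Real.exp (k*x) - 1))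
      measurableSet_Iio).mpr (ae_of_all _ fun x hx => (hpos x hx).le)
  unfold DFun
  rw [integral_pos_iff_support_of_nonneg_ae hnn hi]
  have hsub : Iio (-1:ℝ) ⊆ Function.support (fun x => x * (Real.exp (k*x) - 1)) ∩ Iio 0 := by
    intro x hx
    have hx0 : x < 0 := lt_trans hx (by norm_num)
    exact ⟨(hpos x hx0).ne', hx0⟩
  calc (0:ℝ≥0∞) < φm (Iio (-1)) := tail_pos hθpos hφtail
    _ ≤ φm (Function.support (fun x => x * (Real.exp (k*x) - 1)) ∩ Iio 0) := measure_mono hsub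
    _ = (φm.restrict (Iio 0)) (Function.support fun x => x * (Real.exp (k*x) - 1)) :=
        (Measure.restrict_apply (measurableSet_support
          (cont_deriv_integrand k).measurable)).symm


lemma mFun_eq (φm : Measure ℝ) (α : ℝ) (y : ℝ) :
    mFun φm α y = Real.exp (-(α*y)) * IFun φm (Real.exp y) := by
  unfold mFun
  rw [psiSemi_eq]
  simp

lemma hasDerivAt_mFun {φm : Measure ℝ} {α : ℝ}
    (hI : ∀ k : ℝ, 0 < k → HasDerivAt (IFun φm) (DFun φm k) k) (y : ℝ) :
    HasDerivAt (mFun φm α) (-α * Real.exp (-(α*y)) * IFun φm (Real.exp y)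
      + Real.exp (-(α*y)) * (DFun φm (Real.exp y) * Real.exp y)) y := by
  have heq : mFun φm α = fun y => Real.exp (-(α*y)) * IFun φm (Real.exp y) :=
    funext (mFun_eq φm α)
  rw [heq]
  have hin : HasDerivAt (fun y : ℝ => -(α*y)) (-α) y := by
    exact (((hasDerivAt_id y).const_mul α).neg).congr_deriv (by simp)
  have h1 : HasDerivAt (fun y : ℝ => Real.exp (-(α*y))) (Real.exp (-(α*y)) * (-α)) y :=
    hin.exp
  have h2 : HasDerivAt (fun y : ℝ => IFun φm (Real.exp y))
      (DFun φm (Real.exp y) * Real.exp y) y :=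
    (hI _ (Real.exp_pos y)).comp y (Real.hasDerivAt_exp y)
  exact (h1.mul h2).congr_deriv (by ring)

end GammaAux

open GammaAux

/-- Lemma 4.3: `γ(x) = e^{-x/α} (−f(e^x)/(e^x + f(e^x))) ξ(e^x)` is
continuous and `log c`-periodic, and `(−f(s)/(s + f(s))) ξ(s) = s^{1/α} γ(log s)`. -/
theorem gamma_periodic
    (α c : ℝ) (hα : 1 < α ∧ α < 2) (hc : 1 < c)
    (θ : ℝ → ℝ) (hθc : Continuous θ) (hθpos : ∀ y : ℝ, 0 < θ y)
    (hθper : Function.Periodic θ (Real.log (c ^ (1 / α))))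
    (hθmono : AntitoneOn (fun x : ℝ => x ^ (-α) * θ (Real.log x)) (Set.Ioi 0))
    (φm : MeasureTheory.Measure ℝ)
    (hφtail : ∀ x : ℝ, 0 < x → φm (Set.Iio (-x)) = ENNReal.ofReal (x ^ (-α) * θ (Real.log x)))
    (hφsupp : φm (Set.Ici 0) = 0)
    (ξ : ℝ → ℝ)
    (hξ : ∀ s : ℝ, 0 < s → 0 < ξ s ∧ psiSemi φm (-(Complex.I * (ξ s : ℂ))) = (s : ℂ))
    (f : ℝ → ℝ)
    (hf : ∀ s : ℝ, 0 < s →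
      f s = (1 / α) * ξ s ^ α * deriv (mFun φm α) (Real.log (ξ s))) :
    Continuous (gammaFun α f ξ) ∧
    Function.Periodic (gammaFun α f ξ) (Real.log c) ∧
    (∀ s : ℝ, 0 < s →
      (-(f s) / (s + f s)) * ξ s = s ^ (1 / α) * gammaFun α f ξ (Real.log s)) := by
  obtain ⟨hα1, hα2⟩ := hα
  have hα0 : (0:ℝ) < α := by linarith
  have hαne : α ≠ 0 := ne_of_gt hα0
  have hc0 : (0:ℝ) < c := lt_trans one_pos hc
  set r : ℝ := c ^ (1/α) with hr
  have hr0 : 0 < r := Real.rpow_pos_of_pos hc0 _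
  have hr1 : 1 < r := by
    rw [hr, Real.one_lt_rpow_iff_of_pos hc0]
    exact Or.inl ⟨hc, by positivity⟩
  have hrα : r ^ α = c := by
    rw [hr, ← Real.rpow_mul hc0.le, one_div_mul_cancel hαne, Real.rpow_one]
  have hξpos : ∀ s, 0 < s → 0 < ξ s := fun s hs => (hξ s hs).1
  have hIξ : ∀ s, 0 < s → IFun φm (ξ s) = s := by
    intro s hs
    have h := (hξ s hs).2
    rw [psiSemi_eq] at h
    exact_mod_cast h
  -- finiteness of JFun for all positive k
  have hJfin : ∀ k, 0 < k → JFun φm k ≠ ⊤ := by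
    intro k hk
    have h1 : JFun φm (ξ 1) ≠ ⊤ := by
      intro htop
      have h := hIξ 1 one_pos
      rw [IFun_eq_toReal, htop] at h
      simp at h
    have hξ1 := hξpos 1 one_pos
    have hscale : ∀ n : ℕ, JFun φm (r^n * ξ 1) = (ENNReal.ofReal c)^n * JFun φm (ξ 1) := by
      intro n
      induction n with
      | zero => simp
      | succ n ih =>
        have hpos : 0 < r^n * ξ 1 := by positivity
        calc JFun φm (r^(n+1) * ξ 1) = JFun φm (r * (r^n * ξ 1)) := by ring_nf
          _ = ENNReal.ofReal c * JFun φm (r^n * ξ 1) :=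
              JFun_scale hα1 hc hθper hφtail hpos
          _ = (ENNReal.ofReal c)^(n+1) * JFun φm (ξ 1) := by
              rw [ih, pow_succ]
              ring
    obtain ⟨n, hn⟩ := pow_unbounded_of_one_lt (k / ξ 1) hr1
    have hkle : k ≤ r^n * ξ 1 := by
      rw [div_lt_iff₀ hξ1] at hn
      linarith
    have hmono := JFun_mono φm hk hkle
    intro htop
    rw [htop, top_le_iff] at hmono
    rw [hscale n] at hmono
    exact (ENNReal.mul_ne_top (ENNReal.pow_ne_top ENNReal.ofReal_ne_top) h1) hmono
  have hints : ∀ k, 0 < k → Integrable (fun x => Hfun (k*x)) (φm.restrict (Iio 0)) :=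
    fun k hk => integrable_Hfun (hJfin k hk)
  have hIscale : ∀ k, 0 < k → IFun φm (r*k) = c * IFun φm k :=
    fun k hk => IFun_scale hα1 hc hθper hφtail hk
  have hImono : ∀ k1 k2, 0 < k1 → k1 < k2 → IFun φm k1 < IFun φm k2 :=
    fun k1 k2 h1 h12 => IFun_strict hθpos hφtail h1 h12 (hints _ h1) (hints _ (by linarith))
  have hIinj : ∀ k1 k2, 0 < k1 → 0 < k2 → IFun φm k1 = IFun φm k2 → k1 = k2 := by
    intro k1 k2 h1 h2 heq
    rcases lt_trichotomy k1 k2 with h|h|h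
    · exact absurd heq (ne_of_lt (hImono _ _ h1 h))
    · exact h
    · exact absurd heq.symm (ne_of_lt (hImono _ _ h2 h))
  have hξscale : ∀ s, 0 < s → ξ (c*s) = r * ξ s := by
    intro s hs
    have hcs : 0 < c*s := by positivity
    apply hIinj _ _ (hξpos _ hcs) (mul_pos hr0 (hξpos s hs))
    rw [hIξ _ hcs, hIscale _ (hξpos s hs), hIξ s hs]
  have hDF : ∀ k, 0 < k → HasDerivAt (IFun φm) (DFun φm k) k :=
    fun k hk => (hasDerivAt_IFun hk hints).2
  have hDint : ∀ k, 0 < k → Integrable (fun x => x * (Real.exp (k*x) - 1)) (φm.restrict (Iio 0)) :=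
    fun k hk => (hasDerivAt_IFun hk hints).1
  have hDpos : ∀ k, 0 < k → 0 < DFun φm k :=
    fun k hk => DFun_pos hθpos hφtail hk (hDint k hk)
  have hderivm : ∀ y, deriv (mFun φm α) y =
      -α * Real.exp (-(α*y)) * IFun φm (Real.exp y)
      + Real.exp (-(α*y)) * (DFun φm (Real.exp y) * Real.exp y) :=
    fun y => (hasDerivAt_mFun hDF y).deriv
  -- formula for f
  have hffor : ∀ s, 0 < s → f s = -s + (1/α) * ξ s * DFun φm (ξ s) := by
    intro s hs
    have hxp := hξpos s hs
    rw [hf s hs, hderivm, Real.exp_log hxp, hIξ s hs]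
    have hexp : Real.exp (-(α * Real.log (ξ s))) = (ξ s) ^ (-α) := by
      rw [Real.rpow_def_of_pos hxp]
      congr 1
      ring
    rw [hexp]
    have hpow : (ξ s)^α * (ξ s)^(-α) = 1 := by
      rw [← Real.rpow_add hxp]
      simp
    have hcalc : (1/α) * (ξ s)^α * (-α * (ξ s)^(-α) * s + (ξ s)^(-α) * (DFun φm (ξ s) * ξ s))
        = (1/α) * ((ξ s)^α * (ξ s)^(-α)) * (-α * s + DFun φm (ξ s) * ξ s) := by ring
    rw [hcalc, hpow]
    field_simp
  have hsum : ∀ s, 0 < s → s + f s = (1/α) * ξ s * DFun φm (ξ s) := by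
    intro s hs
    rw [hffor s hs]
    ring
  have hsumpos : ∀ s, 0 < s → 0 < s + f s := by
    intro s hs
    rw [hsum s hs]
    have h1 := hDpos (ξ s) (hξpos s hs)
    have h2 := hξpos s hs
    positivity
  -- periodicity of mFun and its derivative
  have hmper : Function.Periodic (mFun φm α) (Real.log r) := by
    intro y
    rw [mFun_eq, mFun_eq]
    have hexp1 : Real.exp (y + Real.log r) = r * Real.exp y := by
      rw [Real.exp_add, Real.exp_log hr0]
      ring
    rw [hexp1, hIscale _ (Real.exp_pos y)]
    have hexp2 : Real.exp (-(α * (y + Real.log r))) = Real.exp (-(α*y)) * c⁻¹ := by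
      rw [show -(α * (y + Real.log r)) = -(α*y) + -(α * Real.log r) by ring, Real.exp_add]
      congr 1
      rw [Real.exp_neg]
      congr 1
      rw [← hrα, Real.rpow_def_of_pos hr0]
      congr 1
      ring
    rw [hexp2]
    field_simp
  have hmderper : ∀ y, deriv (mFun φm α) (y + Real.log r) = deriv (mFun φm α) y := by
    intro y
    have h1 : (fun t => mFun φm α (t + Real.log r)) = mFun φm α := funext fun t => hmper t
    calc deriv (mFun φm α) (y + Real.log r)
        = deriv (fun t => mFun φm α (t + Real.log r)) y := (deriv_comp_add_const _ _ _).symm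
      _ = deriv (mFun φm α) y := by rw [h1]
  have hfscale : ∀ s, 0 < s → f (c*s) = c * f s := by
    intro s hs
    have hcs : 0 < c*s := by positivity
    rw [hf _ hcs, hf s hs, hξscale s hs]
    have hlog : Real.log (r * ξ s) = Real.log (ξ s) + Real.log r := by
      rw [Real.log_mul hr0.ne' (hξpos s hs).ne']
      ring
    rw [hlog, hmderper]
    have hpowm : (r * ξ s) ^ α = c * (ξ s)^α := by
      rw [Real.mul_rpow hr0.le (hξpos s hs).le, hrα]
    rw [hpowm]
    ring
  -- periodicity of gamma
  have hper : Function.Periodic (gammaFun α f ξ) (Real.log c) := by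
    intro x
    unfold gammaFun
    have hexp : Real.exp (x + Real.log c) = c * Real.exp x := by
      rw [Real.exp_add, Real.exp_log hc0]
      ring
    rw [hexp, hfscale _ (Real.exp_pos x), hξscale _ (Real.exp_pos x)]
    have h1 : -(c * f (Real.exp x)) / (c * Real.exp x + c * f (Real.exp x))
        = -(f (Real.exp x)) / (Real.exp x + f (Real.exp x)) := by
      rw [show c * Real.exp x + c * f (Real.exp x) = c * (Real.exp x + f (Real.exp x)) by ring,
        show -(c * f (Real.exp x)) = c * (-(f (Real.exp x))) by ring,
        mul_div_mul_left _ _ hc0.ne']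
    rw [h1]
    have h3 : Real.exp (-(x + Real.log c)/α) = Real.exp (-x/α) * r⁻¹ := by
      rw [show -(x + Real.log c)/α = -x/α + -(Real.log c/α) by ring, Real.exp_add]
      congr 1
      rw [Real.exp_neg]
      congr 1
      rw [hr, Real.rpow_def_of_pos hc0]
      congr 1
      ring
    rw [h3]
    have hrr : r⁻¹ * r = 1 := inv_mul_cancel₀ hr0.ne'
    linear_combination (Real.exp (-x/α) * (-(f (Real.exp x)) / (Real.exp x + f (Real.exp x)))
      * ξ (Real.exp x)) * hrr
  -- the identity
  have heqs : ∀ s : ℝ, 0 < s →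
      (-(f s) / (s + f s)) * ξ s = s ^ (1/α) * gammaFun α f ξ (Real.log s) := by
    intro s hs
    unfold gammaFun
    rw [Real.exp_log hs]
    have h1 : Real.exp (-Real.log s / α) = s ^ (-(1/α)) := by
      rw [Real.rpow_def_of_pos hs]
      congr 1
      ring
    rw [h1]
    have h2 : s^(1/α) * s^(-(1/α)) = 1 := by
      rw [← Real.rpow_add hs]
      simp
    calc (-(f s)/(s + f s)) * ξ s
        = (s^(1/α) * s^(-(1/α))) * ((-(f s)/(s + f s)) * ξ s) := by rw [h2]; ring
      _ = s^(1/α) * (s^(-(1/α)) * (-(f s)/(s+f s)) * ξ s) := by ring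
  -- continuity of ξ
  have hξI : ∀ k, 0 < k → ξ (IFun φm k) = k := by
    intro k hk
    have hIk : 0 < IFun φm k := IFun_pos hθpos hφtail hk (hints k hk)
    exact hIinj _ _ (hξpos _ hIk) hk (hIξ _ hIk)
  have hξmono : ∀ s1 s2, 0 < s1 → s1 < s2 → ξ s1 < ξ s2 := by
    intro s1 s2 h1 h12
    by_contra hle
    push_neg at hle
    have h2 : 0 < s2 := by linarith
    rcases eq_or_lt_of_le hle with h|h
    · have heq := hIξ s1 h1
      rw [← h, hIξ s2 h2] at heq
      linarith
    · have hlt := hImono _ _ (hξpos s2 h2) h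
      rw [hIξ s1 h1, hIξ s2 h2] at hlt
      linarith
  have hξcont : ∀ s, 0 < s → ContinuousAt ξ s := by
    intro s0 hs0
    rw [Metric.continuousAt_iff]
    intro ε hε
    have hk0p : 0 < ξ s0 := hξpos s0 hs0
    set k0 := ξ s0 with hk0
    set ε' : ℝ := min (ε/2) (k0/2) with hε'
    have hε'p : 0 < ε' := lt_min (by linarith) (by linarith)
    have hε'2 : ε' ≤ ε/2 := min_le_left _ _
    have hε'k : ε' ≤ k0/2 := min_le_right _ _
    have hkm : 0 < k0 - ε' := by linarith
    have hkp : 0 < k0 + ε' := by linarith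
    set sm := IFun φm (k0 - ε') with hsm
    set sp := IFun φm (k0 + ε') with hsp
    have hsmpos : 0 < sm := IFun_pos hθpos hφtail hkm (hints _ hkm)
    have hIk0 : IFun φm k0 = s0 := hIξ s0 hs0
    have h1 : sm < s0 := by
      have h := hImono _ _ hkm (by linarith : k0 - ε' < k0)
      rwa [hIk0] at h
    have h2 : s0 < sp := by
      have h := hImono _ _ hk0p (by linarith : k0 < k0 + ε')
      rwa [hIk0] at h
    refine ⟨min (s0 - sm) (sp - s0), lt_min (by linarith) (by linarith), ?_⟩
    intro s hdist
    rw [Real.dist_eq] at hdist ⊢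
    have hd1 : |s - s0| < s0 - sm := lt_of_lt_of_le hdist (min_le_left _ _)
    have hd2 : |s - s0| < sp - s0 := lt_of_lt_of_le hdist (min_le_right _ _)
    rcases abs_lt.mp hd1 with ⟨hd1a, _⟩
    rcases abs_lt.mp hd2 with ⟨_, hd2b⟩
    have hs1 : sm < s := by linarith
    have hs2 : s < sp := by linarith
    have hsp0 : 0 < s := lt_trans hsmpos hs1
    have hmono1 : ξ sm < ξ s := hξmono _ _ hsmpos hs1
    have hmono2 : ξ s < ξ sp := hξmono _ _ hsp0 hs2
    rw [hξI _ hkm] at hmono1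
    rw [hξI _ hkp] at hmono2
    have habs : |ξ s - ξ s0| < ε' := abs_lt.mpr ⟨by linarith, by linarith⟩
    linarith
  -- continuity of gamma
  have hcont : Continuous (gammaFun α f ξ) := by
    rw [continuous_iff_continuousAt]
    intro x
    have hex : 0 < Real.exp x := Real.exp_pos x
    have cξ : ContinuousAt (fun x => ξ (Real.exp x)) x :=
      (hξcont _ hex).comp Real.continuous_exp.continuousAt
    have cf : ContinuousAt (fun x => f (Real.exp x)) x := by
      have heq : (fun x => f (Real.exp x))
          = fun x => -Real.exp x + (1/α) * ξ (Real.exp x) * DFun φm (ξ (Real.exp x)) :=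
        funext fun x => hffor _ (Real.exp_pos x)
      rw [heq]
      apply ContinuousAt.add
      · exact Real.continuous_exp.continuousAt.neg
      · have cD : ContinuousAt (fun x => DFun φm (ξ (Real.exp x))) x :=
          ContinuousAt.comp (g := DFun φm) (f := fun x => ξ (Real.exp x))
            (contAt_DFun (hξpos _ hex) hints) cξ
        exact (continuousAt_const.mul cξ).mul cD
    have hden : Real.exp x + f (Real.exp x) ≠ 0 := (hsumpos _ hex).ne'
    have c1 : ContinuousAt (fun x : ℝ => Real.exp (-x/α)) x :=
      (Real.continuous_exp.comp ((continuous_id.neg).div_const α)).continuousAt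
    have c2 : ContinuousAt (fun x => -(f (Real.exp x)) / (Real.exp x + f (Real.exp x))) x :=
      (cf.neg).div (Real.continuous_exp.continuousAt.add cf) hden
    exact ((c1.mul c2).mul cξ : _)
  exact ⟨hcont, hper, heqs⟩
end
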